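/- arXiv:2012.04819 — 3 statements merged into one kernel-verified Lean document; each statement's English description precedes it below -/
import Mathlib

section
/- Let 0 < α < 1, assume the SICA parameters are positive, the incidence function f satisfies (H1)–(H3), and R₀ ≤ 1. Let (S,I,C,A) be a solution of the fractional SICA system on [0,T] with S, I, C, A positive on [0,T]. Define the Lyapunov functional V₁(t) = S(t) − S₀ − ∫_{S₀}^{S(t)} f(S₀,0)/f(X,0) dX + I(t) + (ω/ξ₂) C(t) + (σ/ξ₃) A(t). Then ᶜD^α V₁(t) ≤ 0 for all t ∈ (0,T]. -/
/-- The Caputo fractional derivative of order `α` (0 < α < 1) based at `0`: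
`ᶜD^α φ(t) = (1/Γ(1−α)) ∫₀ᵗ φ′(x)(t−x)^{−α} dx`. -/
noncomputable def caputo (α : ℝ) (φ : ℝ → ℝ) (t : ℝ) : ℝ :=
  (1 / Real.Gamma (1 - α)) * ∫ x in (0:ℝ)..t, deriv φ x * (t - x) ^ (-α)

open MeasureTheory Set intervalIntegral Filter Topology

lemma kernelInt (α t : ℝ) (hα1 : α < 1) :
    IntegrableOn (fun x => (t - x) ^ (-α)) (Set.Ioo 0 t) volume := by
  have h : IntervalIntegrable (fun x : ℝ => x ^ (-α)) volume 0 t :=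
    intervalIntegral.intervalIntegrable_rpow' (by linarith)
  have h2 := (h.comp_sub_left t).symm
  simp only [sub_zero, sub_self] at h2
  rcases le_or_gt t 0 with h0 | h0
  · rw [Set.Ioo_eq_empty (by intro h; linarith)]
    exact integrableOn_empty
  · have := (intervalIntegrable_iff_integrableOn_Ioc_of_le (le_of_lt h0)).mp h2
    exact this.mono_set Set.Ioo_subset_Ioc_self

lemma mulKernelInt (α t : ℝ) (hα1 : α < 1) (v : ℝ → ℝ) (M : ℝ)
    (hv : ContinuousOn v (Set.Ioo 0 t)) (hM : ∀ x ∈ Set.Ioo (0:ℝ) t, |v x| ≤ M) :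
    IntegrableOn (fun x => v x * (t - x) ^ (-α)) (Set.Ioo 0 t) volume := by
  have hker : ContinuousOn (fun x => (t - x) ^ (-α)) (Set.Ioo 0 t) := by
    apply ContinuousOn.rpow_const
    · exact (continuous_const.sub continuous_id).continuousOn
    · intro x hx; exact Or.inl (ne_of_gt (by simp at hx ⊢; linarith [hx.2]))
  have hmeas : AEStronglyMeasurable (fun x => v x * (t - x) ^ (-α))
      (volume.restrict (Set.Ioo 0 t)) :=
    ((hv.mul hker).aemeasurable measurableSet_Ioo).aestronglyMeasurable
  apply Integrable.mono ((kernelInt α t hα1).const_mul M) hmeas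
  filter_upwards [ae_restrict_mem measurableSet_Ioo] with x hx
  have hk0 : 0 ≤ (t - x) ^ (-α) := Real.rpow_nonneg (by linarith [hx.2]) _
  have : |v x * (t - x) ^ (-α)| ≤ M * (t - x) ^ (-α) := by
    rw [abs_mul, abs_of_nonneg hk0]
    exact mul_le_mul_of_nonneg_right (hM x hx) hk0
  calc ‖v x * (t - x) ^ (-α)‖ ≤ M * (t - x) ^ (-α) := this
    _ ≤ ‖M * (t - x) ^ (-α)‖ := le_abs_self _

lemma key_ineq (α t : ℝ) (hα0 : 0 < α) (hα1 : α < 1) (ht : 0 < t)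
    (w u : ℝ → ℝ) (M : ℝ)
    (hw : ∀ x ∈ Set.Ioo (0:ℝ) t, HasDerivAt w (u x) x)
    (hu_cont : ContinuousOn u (Set.Ioo 0 t))
    (hu_bdd : ∀ x ∈ Set.Ioo (0:ℝ) t, |u x| ≤ M)
    (hw_cont : ContinuousOn w (Set.Icc 0 t))
    (hw_nonneg : ∀ x ∈ Set.Icc (0:ℝ) t, 0 ≤ w x)
    (hwt : w t = 0) :
    ∫ x in Set.Ioo (0:ℝ) t, u x * (t - x) ^ (-α) ≤ 0 := by
  have hM0 : 0 ≤ M :=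
    le_trans (abs_nonneg _) (hu_bdd (t/2) ⟨by linarith, by linarith⟩)
  -- Step 1 : regularized inequality
  have step1 : ∀ ε : ℝ, 0 < ε →
      ∫ x in Set.Ioo (0:ℝ) t, u x * (t - x + ε) ^ (-α) ≤ 0 := by
    intro ε hε
    set kε : ℝ → ℝ := fun x => (t - x + ε) ^ (-α) with hkεdef
    set F' : ℝ → ℝ := fun x => u x * kε x + w x * (α * (t - x + ε) ^ (-α - 1)) with hF'def
    have hbase : ∀ x ∈ Set.Icc (0:ℝ) t, 0 < t - x + ε := fun x hx => by
      have := hx.2; linarith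
    have hkε_cont : ContinuousOn kε (Set.Icc 0 t) := by
      apply ContinuousOn.rpow_const
      · exact Continuous.continuousOn (by fun_prop)
      · exact fun x hx => Or.inl (ne_of_gt (hbase x hx))
    have hderiv : ∀ x ∈ Set.Ioo (0:ℝ) t, HasDerivAt (fun y => w y * kε y) (F' x) x := by
      intro x hx
      have hxpos : 0 < t - x + ε := hbase x ⟨hx.1.le, hx.2.le⟩
      have hinner : HasDerivAt (fun y => t - y + ε) (-1) x := by
        simpa using (((hasDerivAt_id x).const_sub t).add_const ε)
      have houter := Real.hasDerivAt_rpow_const (x := t - x + ε) (p := -α)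
        (Or.inl (ne_of_gt hxpos))
      have hkεd : HasDerivAt kε (α * (t - x + ε) ^ (-α - 1)) x := by
        have := houter.comp x hinner
        exact this.congr_deriv (by ring)
      exact ((hw x hx).mul hkεd)
    have hIoo_ne : (volume (Set.Ioo (0:ℝ) t)) ≠ ⊤ := by
      simp [Real.volume_Ioo]
    have hukε_int : IntegrableOn (fun x => u x * kε x) (Set.Ioo 0 t) volume := by
      have hcont : ContinuousOn (fun x => u x * kε x) (Set.Ioo 0 t) :=
        hu_cont.mul (hkε_cont.mono Set.Ioo_subset_Icc_self)
      have hmeas : AEStronglyMeasurable (fun x => u x * kε x)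
          (volume.restrict (Set.Ioo 0 t)) :=
        ((hcont).aemeasurable measurableSet_Ioo).aestronglyMeasurable
      apply Integrable.mono (g := fun _ : ℝ => M * ε ^ (-α))
        (integrableOn_const (by simp [Real.volume_Ioo])) hmeas
      filter_upwards [ae_restrict_mem measurableSet_Ioo] with x hx
      have h1 : kε x ≤ ε ^ (-α) :=
        Real.rpow_le_rpow_of_nonpos hε (by linarith [hx.2]) (by linarith)
      have h2 : 0 ≤ kε x := Real.rpow_nonneg (by linarith [hx.2]) _
      have : ‖u x * kε x‖ = |u x| * kε x := by rw [norm_mul, Real.norm_eq_abs, Real.norm_eq_abs, abs_of_nonneg h2]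
      rw [this]
      have hnn : (0:ℝ) ≤ M * ε ^ (-α) := mul_nonneg hM0 (Real.rpow_nonneg hε.le _)
      rw [Real.norm_eq_abs, abs_of_nonneg hnn]
      exact mul_le_mul (hu_bdd x hx) h1 h2 hM0
    have hwkε'_cont : ContinuousOn (fun x => w x * (α * (t - x + ε) ^ (-α - 1))) (Set.Icc 0 t) := by
      apply hw_cont.mul
      apply ContinuousOn.mul continuousOn_const
      apply ContinuousOn.rpow_const
      · exact Continuous.continuousOn (by fun_prop)
      · exact fun x hx => Or.inl (ne_of_gt (hbase x hx))
    have hwkε'_ii : IntervalIntegrable (fun x => w x * (α * (t - x + ε) ^ (-α - 1))) volume 0 t := by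
      apply ContinuousOn.intervalIntegrable
      rwa [Set.uIcc_of_le ht.le]
    have hukε_ii : IntervalIntegrable (fun x => u x * kε x) volume 0 t := by
      rw [intervalIntegrable_iff_integrableOn_Ioo_of_le ht.le]
      exact hukε_int
    have hint : IntervalIntegrable F' volume 0 t := hukε_ii.add hwkε'_ii
    have hFTC := intervalIntegral.integral_eq_sub_of_hasDerivAt_of_le ht.le
      (hw_cont.mul hkε_cont) hderiv hint
    have hsplit : ∫ x in (0:ℝ)..t, F' x =
        (∫ x in (0:ℝ)..t, u x * kε x) + ∫ x in (0:ℝ)..t, w x * (α * (t - x + ε) ^ (-α - 1)) :=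
      intervalIntegral.integral_add hukε_ii hwkε'_ii
    have hpos2 : 0 ≤ ∫ x in (0:ℝ)..t, w x * (α * (t - x + ε) ^ (-α - 1)) := by
      apply intervalIntegral.integral_nonneg ht.le
      intro x hx
      have := hw_nonneg x hx
      have hb : (0:ℝ) ≤ t - x + ε := (hbase x hx).le
      positivity
    have hw0 : 0 ≤ w 0 * kε 0 := mul_nonneg (hw_nonneg 0 ⟨le_rfl, ht.le⟩)
      (Real.rpow_nonneg (hbase 0 ⟨le_rfl, ht.le⟩).le _)
    have hle : ∫ x in (0:ℝ)..t, u x * kε x ≤ 0 := by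
      have : (∫ x in (0:ℝ)..t, u x * kε x) =
          (w t * kε t - w 0 * kε 0) - ∫ x in (0:ℝ)..t, w x * (α * (t - x + ε) ^ (-α - 1)) := by
        rw [← Pi.mul_apply w kε t, ← Pi.mul_apply w kε 0, ← hFTC, hsplit]; ring
      rw [this, hwt]
      simp only [zero_mul, zero_sub]
      linarith
    calc ∫ x in Set.Ioo (0:ℝ) t, u x * (t - x + ε) ^ (-α)
        = ∫ x in (0:ℝ)..t, u x * kε x := by
          rw [intervalIntegral.integral_of_le ht.le, MeasureTheory.integral_Ioc_eq_integral_Ioo]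
      _ ≤ 0 := hle
  -- Step 2 : dominated convergence
  have hmeas : ∀ n : ℕ, AEStronglyMeasurable (fun x => u x * (t - x + 1/((n:ℝ)+1)) ^ (-α))
      (volume.restrict (Set.Ioo 0 t)) := by
    intro n
    have hcont : ContinuousOn (fun x => u x * (t - x + 1/((n:ℝ)+1)) ^ (-α)) (Set.Ioo 0 t) := by
      apply hu_cont.mul
      apply ContinuousOn.rpow_const
      · exact Continuous.continuousOn (by fun_prop)
      · intro x hx
        have hp : (0:ℝ) < 1/((n:ℝ)+1) := by positivity
        have hx2 : x < t := hx.2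
        exact Or.inl (ne_of_gt (by linarith))
    exact ((hcont).aemeasurable measurableSet_Ioo).aestronglyMeasurable
  have hbound_int : Integrable (fun x => M * (t - x) ^ (-α))
      (volume.restrict (Set.Ioo 0 t)) := (kernelInt α t hα1).const_mul M
  have htend := MeasureTheory.tendsto_integral_of_dominated_convergence
    (μ := volume.restrict (Set.Ioo (0:ℝ) t))
    (F := fun n x => u x * (t - x + 1/((n:ℝ)+1)) ^ (-α))
    (f := fun x => u x * (t - x) ^ (-α))
    (fun x => M * (t - x) ^ (-α)) hmeas hbound_int
    (by
      intro n
      filter_upwards [ae_restrict_mem measurableSet_Ioo] with x hx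
      have hpos : (0:ℝ) < 1/((n:ℝ)+1) := by positivity
      have htx : 0 < t - x := by linarith [hx.2]
      have h1 : (t - x + 1/((n:ℝ)+1)) ^ (-α) ≤ (t - x) ^ (-α) :=
        Real.rpow_le_rpow_of_nonpos htx (by linarith) (by linarith)
      have h2 : 0 ≤ (t - x + 1/((n:ℝ)+1)) ^ (-α) := Real.rpow_nonneg (by linarith) _
      rw [norm_mul, Real.norm_eq_abs, Real.norm_eq_abs, abs_of_nonneg h2]
      exact mul_le_mul (hu_bdd x hx) h1 h2 hM0)
    (by
      filter_upwards [ae_restrict_mem measurableSet_Ioo] with x hx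
      have htx : 0 < t - x := by linarith [hx.2]
      have h1 : Tendsto (fun n : ℕ => t - x + 1/((n:ℝ)+1)) atTop (𝓝 (t - x)) := by
        simpa using (tendsto_const_nhds : Tendsto (fun _ : ℕ => t - x) atTop (𝓝 (t - x))).add tendsto_one_div_add_atTop_nhds_zero_nat
      have h2 : ContinuousAt (fun y : ℝ => y ^ (-α)) (t - x) :=
        Real.continuousAt_rpow_const _ _ (Or.inl (ne_of_gt htx))
      exact (h2.tendsto.comp h1).const_mul (u x))
  exact le_of_tendsto htend (Filter.Eventually.of_forall fun n => step1 _ (by positivity))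
set_option maxHeartbeats 2000000

/- STATEMENT 7: Let 0 < α < 1, SICA parameters positive, f satisfying (H1)–(H3),
R₀ ≤ 1, and (S,I,C,A) a positive solution of the fractional SICA system on [0,T].
With V₁(t) = S(t) − S₀ − ∫_{S₀}^{S(t)} f(S₀,0)/f(X,0) dX + I(t) + (ω/ξ₂)C(t) + (σ/ξ₃)A(t),
one has ᶜD^α V₁(t) ≤ 0 for all t ∈ (0,T]. -/
theorem stmt_7 (α T : ℝ) (hα0 : 0 < α) (hα1 : α < 1) (hT : 0 < T)
    (Λ μ ρ φ σ ω d ξ₁ ξ₂ ξ₃ D S0 R₀ : ℝ)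
    (hΛ : 0 < Λ) (hμ : 0 < μ) (hρ : 0 < ρ) (hφ : 0 < φ) (hσ : 0 < σ)
    (hω : 0 < ω) (hd : 0 < d)
    (hξ₁ : ξ₁ = ρ + φ + μ) (hξ₂ : ξ₂ = ω + μ) (hξ₃ : ξ₃ = σ + μ + d)
    (hD : D = μ * (ξ₂ * (ξ₃ + ρ) + φ * ξ₃ + ρ * d) + ρ * ω * d)
    (hS0 : S0 = Λ / μ)
    (f : ℝ → ℝ → ℝ)
    (hR₀def : R₀ = f S0 0 * ξ₂ * ξ₃ / D)
    (hR₀ : R₀ ≤ 1)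
    (hf_nonneg : ∀ S I : ℝ, 0 ≤ S → 0 ≤ I → 0 ≤ f S I)
    (hf_cont : ContinuousOn (fun p : ℝ × ℝ => f p.1 p.2) (Set.Ici 0 ×ˢ Set.Ici 0))
    (hf_cd : ContDiffOn ℝ 1 (fun p : ℝ × ℝ => f p.1 p.2) (Set.Ioi 0 ×ˢ Set.Ioi 0))
    (hH1 : ∀ I : ℝ, 0 ≤ I → f 0 I = 0)
    (hH2 : ∀ S I : ℝ, 0 < S → 0 ≤ I → 0 < deriv (fun s => f s I) S)
    (hH3 : ∀ S I : ℝ, 0 ≤ S → 0 ≤ I → deriv (fun i => f S i) I ≤ 0)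
    (S I C A : ℝ → ℝ)
    (hS : ContDiffOn ℝ 1 S (Set.Icc 0 T)) (hI : ContDiffOn ℝ 1 I (Set.Icc 0 T))
    (hC : ContDiffOn ℝ 1 C (Set.Icc 0 T)) (hA : ContDiffOn ℝ 1 A (Set.Icc 0 T))
    (hSpos : ∀ t ∈ Set.Icc (0:ℝ) T, 0 < S t)
    (hIpos : ∀ t ∈ Set.Icc (0:ℝ) T, 0 < I t)
    (hCpos : ∀ t ∈ Set.Icc (0:ℝ) T, 0 < C t)
    (hApos : ∀ t ∈ Set.Icc (0:ℝ) T, 0 < A t)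
    (hsys1 : ∀ t ∈ Set.Ioc (0:ℝ) T,
      caputo α S t = Λ - μ * S t - f (S t) (I t) * I t)
    (hsys2 : ∀ t ∈ Set.Ioc (0:ℝ) T,
      caputo α I t = f (S t) (I t) * I t - ξ₁ * I t + σ * A t + ω * C t)
    (hsys3 : ∀ t ∈ Set.Ioc (0:ℝ) T,
      caputo α C t = φ * I t - ξ₂ * C t)
    (hsys4 : ∀ t ∈ Set.Ioc (0:ℝ) T,
      caputo α A t = ρ * I t - ξ₃ * A t) :
    ∀ t ∈ Set.Ioc (0:ℝ) T,
      caputo α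
        (fun τ => S τ - S0 - (∫ X in S0..S τ, f S0 0 / f X 0)
          + I τ + (ω / ξ₂) * C τ + (σ / ξ₃) * A τ) t ≤ 0 := by
  
  intro t ht
  have htT : t ≤ T := ht.2
  have ht0 : 0 < t := ht.1
  have htI : t ∈ Set.Icc (0:ℝ) T := ⟨ht0.le, htT⟩
  have hsub : Set.Ioo (0:ℝ) t ⊆ Set.Ioo (0:ℝ) T := Set.Ioo_subset_Ioo le_rfl htT
  have hsubI : Set.Icc (0:ℝ) t ⊆ Set.Icc (0:ℝ) T := Set.Icc_subset_Icc le_rfl htT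
  have hsubII : Set.Ioo (0:ℝ) t ⊆ Set.Icc (0:ℝ) t := Set.Ioo_subset_Icc_self
  -- basic positivity
  have hS0pos : 0 < S0 := by rw [hS0]; positivity
  have hξ₂pos : 0 < ξ₂ := by rw [hξ₂]; linarith
  have hξ₃pos : 0 < ξ₃ := by rw [hξ₃]; linarith
  have hDpos : 0 < D := by rw [hD, hξ₂, hξ₃]; positivity
  have hΓpos : 0 < Real.Gamma (1 - α) := Real.Gamma_pos_of_pos (by linarith)
  -- the function f(·,0)
  have hfS_contOn : ContinuousOn (fun s => f s 0) (Set.Ici 0) := by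
    have h1 : ContinuousOn (fun s : ℝ => ((s, (0:ℝ)) : ℝ × ℝ)) (Set.Ici 0) :=
      (continuous_id.prodMk continuous_const).continuousOn
    exact hf_cont.comp h1 (fun s hs => ⟨hs, Set.self_mem_Ici⟩)
  have hfS_mono : StrictMonoOn (fun s => f s 0) (Set.Ici 0) := by
    apply strictMonoOn_of_deriv_pos (convex_Ici 0) hfS_contOn
    rw [interior_Ici]
    exact fun x hx => hH2 x 0 hx le_rfl
  have hfSpos : ∀ s : ℝ, 0 < s → 0 < f s 0 := by
    intro s hs
    have h2 := hfS_mono (Set.self_mem_Ici) (Set.mem_Ici.mpr hs.le) hs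
    simp only at h2
    rwa [hH1 0 le_rfl] at h2
  have hfstar_pos : 0 < f S0 0 := hfSpos S0 hS0pos
  -- the integrand ρfun
  set ρfun : ℝ → ℝ := fun X => f S0 0 / f X 0 with hρdef
  have hρ_cont : ContinuousOn ρfun (Set.Ioi 0) :=
    continuousOn_const.div (hfS_contOn.mono Set.Ioi_subset_Ici_self)
      (fun x hx => ne_of_gt (hfSpos x hx))
  have hρ_ii : ∀ p q : ℝ, 0 < p → 0 < q → IntervalIntegrable ρfun volume p q := by
    intro p q hp hq
    apply ContinuousOn.intervalIntegrable
    apply hρ_cont.mono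
    intro x hx
    exact lt_of_lt_of_le (lt_min hp hq) hx.1
  set G : ℝ → ℝ := fun y => ∫ X in S0..y, ρfun X with hGdef
  have hG_deriv : ∀ y : ℝ, 0 < y → HasDerivAt G (ρfun y) y := by
    intro y hy
    apply intervalIntegral.integral_hasDerivAt_right (hρ_ii S0 y hS0pos hy)
    · exact ContinuousOn.stronglyMeasurableAtFilter isOpen_Ioi hρ_cont y hy
    · exact hρ_cont.continuousAt (Ioi_mem_nhds hy)
  have hG_cont : ContinuousOn G (Set.Ioi 0) :=
    fun y hy => ((hG_deriv y hy).continuousAt).continuousWithinAt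
  -- monotonicity of ρfun
  have hρ_anti : ∀ p q : ℝ, 0 < p → p ≤ q → ρfun q ≤ ρfun p := by
    intro p q hp hpq
    have h1 : f p 0 ≤ f q 0 :=
      hfS_mono.monotoneOn (Set.mem_Ici.mpr hp.le) (Set.mem_Ici.mpr (hp.le.trans hpq)) hpq
    exact div_le_div_of_nonneg_left hfstar_pos.le (hfSpos p hp) h1
  -- convexity inequality for G
  have hconv : ∀ a b : ℝ, 0 < a → 0 < b → G a - G b ≤ ρfun b * (a - b) := by
    intro a b ha hb
    have hgab : G a - G b = ∫ X in b..a, ρfun X :=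
      intervalIntegral.integral_interval_sub_left (hρ_ii S0 a hS0pos ha) (hρ_ii S0 b hS0pos hb)
    rw [hgab]
    rcases le_or_gt b a with hba | hab
    · have h1 : (∫ X in b..a, ρfun X) ≤ ∫ X in b..a, ρfun b := by
        apply intervalIntegral.integral_mono_on hba (hρ_ii b a hb ha)
          intervalIntegrable_const
        intro x hx
        exact hρ_anti b x hb hx.1
      rw [intervalIntegral.integral_const, smul_eq_mul] at h1
      linarith [h1]
    · have h1 : (∫ X in a..b, ρfun b) ≤ ∫ X in a..b, ρfun X := by
        apply intervalIntegral.integral_mono_on hab.le intervalIntegrable_const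
          (hρ_ii a b ha hb)
        intro x hx
        exact hρ_anti x b (lt_of_lt_of_le ha hx.1) hx.2
      have h2 : (∫ X in b..a, ρfun X) = -∫ X in a..b, ρfun X :=
        (intervalIntegral.integral_symm a b)
      rw [h2]
      simp only [intervalIntegral.integral_const, smul_eq_mul] at h1
      nlinarith [h1]
  -- derivatives of solutions
  have hder : ∀ g : ℝ → ℝ, ContDiffOn ℝ 1 g (Set.Icc 0 T) →
      ∀ x ∈ Set.Ioo (0:ℝ) T, HasDerivAt g (deriv g x) x := by
    intro g hg x hx
    have h1 : Set.Icc (0:ℝ) T ∈ 𝓝 x := Icc_mem_nhds hx.1 hx.2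
    exact ((hg.contDiffAt h1).differentiableAt one_ne_zero).hasDerivAt
  have hdcont : ∀ g : ℝ → ℝ, ContDiffOn ℝ 1 g (Set.Icc 0 T) →
      ContinuousOn (deriv g) (Set.Ioo 0 T) := by
    intro g hg
    have h1 : ContinuousOn (derivWithin g (Set.Icc 0 T)) (Set.Icc 0 T) :=
      hg.continuousOn_derivWithin (uniqueDiffOn_Icc hT) le_rfl
    exact (h1.mono Set.Ioo_subset_Icc_self).congr
      (fun x hx => (derivWithin_of_mem_nhds (Icc_mem_nhds hx.1 hx.2)).symm)
  have hdbdd : ∀ g : ℝ → ℝ, ContDiffOn ℝ 1 g (Set.Icc 0 T) →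
      ∃ M : ℝ, 0 ≤ M ∧ ∀ x ∈ Set.Ioo (0:ℝ) T, |deriv g x| ≤ M := by
    intro g hg
    have h1 : ContinuousOn (derivWithin g (Set.Icc 0 T)) (Set.Icc 0 T) :=
      hg.continuousOn_derivWithin (uniqueDiffOn_Icc hT) le_rfl
    obtain ⟨M, hM⟩ := isCompact_Icc.exists_bound_of_continuousOn h1
    refine ⟨M, le_trans (norm_nonneg _) (hM 0 ⟨le_rfl, hT.le⟩), ?_⟩
    intro x hx
    have := hM x ⟨hx.1.le, hx.2.le⟩
    rwa [← derivWithin_of_mem_nhds (Icc_mem_nhds hx.1 hx.2), ← Real.norm_eq_abs]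
  -- V₁
  set V₁fun : ℝ → ℝ := fun τ => S τ - S0 - (∫ X in S0..S τ, f S0 0 / f X 0)
      + I τ + (ω / ξ₂) * C τ + (σ / ξ₃) * A τ with hV₁def
  set b := S t with hbdef
  have hb : 0 < b := hSpos t htI
  -- derivative of V₁
  have hVd : ∀ x ∈ Set.Ioo (0:ℝ) T, HasDerivAt V₁fun
      (deriv S x - ρfun (S x) * deriv S x + deriv I x
        + (ω / ξ₂) * deriv C x + (σ / ξ₃) * deriv A x) x := by
    intro x hx
    have hSx : 0 < S x := hSpos x ⟨hx.1.le, hx.2.le⟩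
    have hs := hder S hS x hx
    have hGS : HasDerivAt (fun τ => G (S τ)) (ρfun (S x) * deriv S x) x :=
      (hG_deriv (S x) hSx).comp x hs
    exact ((((hs.sub_const S0).sub hGS).add (hder I hI x hx)).add
      ((hder C hC x hx).const_mul (ω / ξ₂))).add ((hder A hA x hx).const_mul (σ / ξ₃))
  -- w and u for the key lemma
  set u : ℝ → ℝ := fun x => (ρfun b - ρfun (S x)) * deriv S x with hudef
  set w : ℝ → ℝ := fun x => (S x - S0 - G (S x)) - (b - S0 - G b)
      - (1 - ρfun b) * (S x - b) with hwdef
  have hwderiv : ∀ x ∈ Set.Ioo (0:ℝ) t, HasDerivAt w (u x) x := by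
    intro x hx
    have hx' := hsub hx
    have hSx : 0 < S x := hSpos x ⟨hx'.1.le, hx'.2.le⟩
    have hs := hder S hS x hx'
    have hGS : HasDerivAt (fun τ => G (S τ)) (ρfun (S x) * deriv S x) x :=
      (hG_deriv (S x) hSx).comp x hs
    have h := ((((hs.sub_const S0).sub hGS).sub_const (b - S0 - G b)).sub
      ((hs.sub_const b).const_mul (1 - ρfun b)))
    exact h.congr_deriv (by ring)
  have hScont : ContinuousOn S (Set.Icc 0 t) := hS.continuousOn.mono hsubI
  have hw_cont : ContinuousOn w (Set.Icc 0 t) := by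
    have hGSc : ContinuousOn (fun x => G (S x)) (Set.Icc 0 t) :=
      hG_cont.comp hScont (fun x hx => hSpos x (hsubI hx))
    exact (((hScont.sub continuousOn_const).sub hGSc).sub continuousOn_const).sub
      (continuousOn_const.mul (hScont.sub continuousOn_const))
  have hw_nonneg : ∀ x ∈ Set.Icc (0:ℝ) t, 0 ≤ w x := by
    intro x hx
    have hSx : 0 < S x := hSpos x (hsubI hx)
    have h1 := hconv (S x) b hSx hb
    simp only [hwdef]
    nlinarith [h1]
  have hwt : w t = 0 := by simp only [hwdef, ← hbdef]; ring
  -- continuity and boundedness of u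
  have hdScont : ContinuousOn (deriv S) (Set.Ioo 0 t) := (hdcont S hS).mono hsub
  have hρS_cont : ContinuousOn (fun x => ρfun b - ρfun (S x)) (Set.Icc 0 t) :=
    continuousOn_const.sub (hρ_cont.comp hScont (fun x hx => hSpos x (hsubI hx)))
  obtain ⟨C1, hC1⟩ := isCompact_Icc.exists_bound_of_continuousOn hρS_cont
  have hC1nn : 0 ≤ C1 := le_trans (norm_nonneg _) (hC1 0 ⟨le_rfl, ht0.le⟩)
  obtain ⟨MS, hMSnn, hMS⟩ := hdbdd S hS
  have hu_cont : ContinuousOn u (Set.Ioo 0 t) :=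
    (hρS_cont.mono hsubII).mul hdScont
  have hu_bdd : ∀ x ∈ Set.Ioo (0:ℝ) t, |u x| ≤ C1 * MS := by
    intro x hx
    simp only [hudef]
    rw [abs_mul]
    exact mul_le_mul (hC1 x (hsubII hx)) (hMS x (hsub hx)) (abs_nonneg _) hC1nn
  have key := key_ineq α t hα0 hα1 ht0 w u (C1 * MS) hwderiv hu_cont hu_bdd
    hw_cont hw_nonneg hwt
  -- caputo as set integral
  have hcap : ∀ g : ℝ → ℝ, caputo α g t
      = (1 / Real.Gamma (1 - α)) * ∫ x in Set.Ioo (0:ℝ) t, deriv g x * (t - x) ^ (-α) := by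
    intro g
    rw [caputo, intervalIntegral.integral_of_le ht0.le,
      MeasureTheory.integral_Ioc_eq_integral_Ioo]
  -- integrability of the pieces
  have hintU : IntegrableOn (fun x => u x * (t - x) ^ (-α)) (Set.Ioo 0 t) volume :=
    mulKernelInt α t hα1 u (C1 * MS) hu_cont hu_bdd
  have hintP : ∀ g : ℝ → ℝ, ContDiffOn ℝ 1 g (Set.Icc 0 T) →
      IntegrableOn (fun x => deriv g x * (t - x) ^ (-α)) (Set.Ioo 0 t) volume := by
    intro g hg
    obtain ⟨M, hMnn, hM⟩ := hdbdd g hg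
    exact mulKernelInt α t hα1 (deriv g) M ((hdcont g hg).mono hsub)
      (fun x hx => hM x (hsub hx))
  have hintS2 := hintP S hS
  have hintI2 := hintP I hI
  have hintC2 := hintP C hC
  have hintA2 := hintP A hA
  -- decomposition of the integral
  have hR4 : Integrable (fun x => (σ / ξ₃) * (deriv A x * (t - x) ^ (-α)))
      (volume.restrict (Set.Ioo 0 t)) := hintA2.const_mul _
  have hR3 : Integrable (fun x => (ω / ξ₂) * (deriv C x * (t - x) ^ (-α)))
      (volume.restrict (Set.Ioo 0 t)) := hintC2.const_mul _
  have hR34 : Integrable (fun x => (ω / ξ₂) * (deriv C x * (t - x) ^ (-α))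
      + (σ / ξ₃) * (deriv A x * (t - x) ^ (-α))) (volume.restrict (Set.Ioo 0 t)) :=
    hR3.add hR4
  have hR234 : Integrable (fun x => deriv I x * (t - x) ^ (-α)
      + ((ω / ξ₂) * (deriv C x * (t - x) ^ (-α))
        + (σ / ξ₃) * (deriv A x * (t - x) ^ (-α)))) (volume.restrict (Set.Ioo 0 t)) :=
    hintI2.add hR34
  have hR1 : Integrable (fun x => (1 - ρfun b) * (deriv S x * (t - x) ^ (-α)))
      (volume.restrict (Set.Ioo 0 t)) := hintS2.const_mul _
  have hR1234 : Integrable (fun x => (1 - ρfun b) * (deriv S x * (t - x) ^ (-α))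
      + (deriv I x * (t - x) ^ (-α)
      + ((ω / ξ₂) * (deriv C x * (t - x) ^ (-α))
        + (σ / ξ₃) * (deriv A x * (t - x) ^ (-α))))) (volume.restrict (Set.Ioo 0 t)) :=
    hR1.add hR234
  have hdecomp : (∫ x in Set.Ioo (0:ℝ) t, deriv V₁fun x * (t - x) ^ (-α))
      = (∫ x in Set.Ioo (0:ℝ) t, u x * (t - x) ^ (-α))
        + ((1 - ρfun b) * (∫ x in Set.Ioo (0:ℝ) t, deriv S x * (t - x) ^ (-α))
        + ((∫ x in Set.Ioo (0:ℝ) t, deriv I x * (t - x) ^ (-α))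
        + ((ω / ξ₂) * (∫ x in Set.Ioo (0:ℝ) t, deriv C x * (t - x) ^ (-α))
        + (σ / ξ₃) * (∫ x in Set.Ioo (0:ℝ) t, deriv A x * (t - x) ^ (-α))))) := by
    have hptwise : Set.EqOn (fun x => deriv V₁fun x * (t - x) ^ (-α))
        (fun x => u x * (t - x) ^ (-α)
          + ((1 - ρfun b) * (deriv S x * (t - x) ^ (-α))
          + (deriv I x * (t - x) ^ (-α)
          + ((ω / ξ₂) * (deriv C x * (t - x) ^ (-α))
          + (σ / ξ₃) * (deriv A x * (t - x) ^ (-α)))))) (Set.Ioo 0 t) := by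
      intro x hx
      have hdV := (hVd x (hsub hx)).deriv
      simp only [hudef]
      rw [hdV]
      ring
    have e0 := MeasureTheory.setIntegral_congr_fun (μ := volume) measurableSet_Ioo hptwise
    have e1 := MeasureTheory.integral_add hintU hR1234
    have e2 := MeasureTheory.integral_add hR1 hR234
    have e3 := MeasureTheory.integral_add hintI2 hR34
    have e4 := MeasureTheory.integral_add hR3 hR4
    have e5 := MeasureTheory.integral_const_mul (μ := volume.restrict (Set.Ioo (0:ℝ) t))
      (1 - ρfun b) (fun x => deriv S x * (t - x) ^ (-α))
    have e6 := MeasureTheory.integral_const_mul (μ := volume.restrict (Set.Ioo (0:ℝ) t))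
      (ω / ξ₂) (fun x => deriv C x * (t - x) ^ (-α))
    have e7 := MeasureTheory.integral_const_mul (μ := volume.restrict (Set.Ioo (0:ℝ) t))
      (σ / ξ₃) (fun x => deriv A x * (t - x) ^ (-α))
    rw [e0, e1, e2, e3, e4, e5, e6, e7]
  -- assemble
  have hfincomp : caputo α V₁fun t
      = (1 / Real.Gamma (1 - α)) * (∫ x in Set.Ioo (0:ℝ) t, u x * (t - x) ^ (-α))
        + ((1 - ρfun b) * caputo α S t + (caputo α I t
          + ((ω / ξ₂) * caputo α C t + (σ / ξ₃) * caputo α A t))) := by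
    rw [hcap V₁fun, hcap S, hcap I, hcap C, hcap A, hdecomp]
    ring
  rw [hsys1 t ht, hsys2 t ht, hsys3 t ht, hsys4 t ht] at hfincomp
  -- the algebraic inequality
  have hIt : 0 < I t := hIpos t htI
  have hfsb_pos : 0 < f b 0 := hfSpos b hb
  have hfb_le : f b (I t) ≤ f b 0 := by
    have hanti : AntitoneOn (fun i => f b i) (Set.Ici 0) := by
      apply antitoneOn_of_deriv_nonpos (convex_Ici 0)
      · have h1 : ContinuousOn (fun i : ℝ => ((b, i) : ℝ × ℝ)) (Set.Ici 0) :=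
          (continuous_const.prodMk continuous_id).continuousOn
        exact hf_cont.comp h1 (fun i hi => ⟨hb.le, hi⟩)
      · rw [interior_Ici]
        intro i hi
        have hopen : IsOpen (Set.Ioi (0:ℝ) ×ˢ Set.Ioi (0:ℝ)) := isOpen_Ioi.prod isOpen_Ioi
        have hdiff : DifferentiableAt ℝ (fun p : ℝ × ℝ => f p.1 p.2) (b, i) :=
          ((hf_cd.differentiableOn one_ne_zero).differentiableAt
            (hopen.mem_nhds ⟨hb, hi⟩))
        have h2 : DifferentiableAt ℝ (fun i : ℝ => ((b, i) : ℝ × ℝ)) i :=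
          (differentiableAt_const b).prodMk differentiableAt_id
        exact (DifferentiableAt.comp i hdiff h2).differentiableWithinAt
      · rw [interior_Ici]
        exact fun i hi => hH3 b i hb.le hi.le
    exact hanti Set.self_mem_Ici (Set.mem_Ici.mpr hIt.le) hIt.le
  have hΛeq : Λ = μ * S0 := by rw [hS0]; field_simp
  have hterm1 : (1 - ρfun b) * (Λ - μ * b) ≤ 0 := by
    rw [hΛeq]
    simp only [hρdef]
    rcases le_or_gt S0 b with hc | hc
    · have h1 : f S0 0 ≤ f b 0 := hfS_mono.monotoneOn (Set.mem_Ici.mpr hS0pos.le)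
        (Set.mem_Ici.mpr hb.le) hc
      have h2 : f S0 0 / f b 0 ≤ 1 := (div_le_one hfsb_pos).mpr h1
      nlinarith [mul_nonneg (mul_nonneg hμ.le (sub_nonneg.mpr h2)) (sub_nonneg.mpr hc)]
    · have h1 : f b 0 < f S0 0 := hfS_mono (Set.mem_Ici.mpr hb.le)
        (Set.mem_Ici.mpr hS0pos.le) hc
      have h2 : 1 < f S0 0 / f b 0 := (one_lt_div hfsb_pos).mpr h1
      nlinarith [mul_nonneg (mul_nonneg hμ.le (sub_nonneg.mpr h2.le)) (sub_nonneg.mpr hc.le)]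
  have hterm2 : ρfun b * (f b (I t) * I t) ≤ f S0 0 * I t := by
    simp only [hρdef]
    have h1 : f S0 0 / f b 0 * f b (I t) ≤ f S0 0 / f b 0 * f b 0 :=
      mul_le_mul_of_nonneg_left hfb_le (by positivity)
    rw [div_mul_cancel₀ _ (ne_of_gt hfsb_pos)] at h1
    calc f S0 0 / f b 0 * (f b (I t) * I t) = (f S0 0 / f b 0 * f b (I t)) * I t := by ring
      _ ≤ f S0 0 * I t := mul_le_mul_of_nonneg_right h1 hIt.le
  have hcoef : f S0 0 - ξ₁ + ω / ξ₂ * φ + σ / ξ₃ * ρ ≤ 0 := by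
    have hfd : f S0 0 * ξ₂ * ξ₃ ≤ D := by
      rw [hR₀def] at hR₀
      exact (div_le_one hDpos).mp hR₀
    have hDid : D = ξ₁ * ξ₂ * ξ₃ - ω * φ * ξ₃ - σ * ρ * ξ₂ := by
      rw [hD, hξ₁, hξ₂, hξ₃]; ring
    have hexp : (f S0 0 - ξ₁ + ω / ξ₂ * φ + σ / ξ₃ * ρ) * (ξ₂ * ξ₃)
        = f S0 0 * ξ₂ * ξ₃ - (ξ₁ * ξ₂ * ξ₃ - ω * φ * ξ₃ - σ * ρ * ξ₂) := by
      field_simp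
      ring
    have h1 : (f S0 0 - ξ₁ + ω / ξ₂ * φ + σ / ξ₃ * ρ) * (ξ₂ * ξ₃) ≤ 0 := by
      rw [hexp, ← hDid]; linarith
    nlinarith [mul_pos hξ₂pos hξ₃pos]
  have halg : (1 - ρfun b) * (Λ - μ * b - f b (I t) * I t)
      + ((f b (I t) * I t - ξ₁ * I t + σ * A t + ω * C t)
      + ((ω / ξ₂) * (φ * I t - ξ₂ * C t) + (σ / ξ₃) * (ρ * I t - ξ₃ * A t))) ≤ 0 := by
    have hexpand : (1 - ρfun b) * (Λ - μ * b - f b (I t) * I t)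
        + ((f b (I t) * I t - ξ₁ * I t + σ * A t + ω * C t)
        + ((ω / ξ₂) * (φ * I t - ξ₂ * C t) + (σ / ξ₃) * (ρ * I t - ξ₃ * A t)))
        = (1 - ρfun b) * (Λ - μ * b) + ρfun b * (f b (I t) * I t)
          + (f S0 0 - ξ₁ + ω / ξ₂ * φ + σ / ξ₃ * ρ) * I t - f S0 0 * I t := by
      field_simp
      ring
    rw [hexpand]
    have h3 : (f S0 0 - ξ₁ + ω / ξ₂ * φ + σ / ξ₃ * ρ) * I t ≤ 0 :=
      mul_nonpos_of_nonpos_of_nonneg hcoef hIt.le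
    linarith [hterm1, hterm2, h3]
  rw [hfincomp]
  have h1 : (1 / Real.Gamma (1 - α)) * (∫ x in Set.Ioo (0:ℝ) t, u x * (t - x) ^ (-α)) ≤ 0 :=
    mul_nonpos_of_nonneg_of_nonpos (by positivity) key
  linarith [halg, h1]
end

section
/- Let 0 < α < 1, assume the SICA parameters are positive, the incidence function f satisfies (H1)–(H3), and let (S*, I*, C*, A*) with S*, I*, C*, A* > 0 satisfy the equilibrium relations Λ = μS* + f(S*,I*)I*, ξ₁I* = f(S*,I*)I* + ωC* + σA*, φI* = ξ₂C*, ρI* = ξ₃A*. Assume (H4): (1 − f(S,I)/f(S,I*))(f(S,I*)/f(S,I) − I/I*) ≤ 0 for all S, I > 0. Let (S,I,C,A) be a solution of the fractional SICA system on [0,T] with S, I, C, A positive on [0,T]. Define V₂(t) = S(t) − S* − ∫_{S*}^{S(t)} f(S*,I*)/f(X,I*) dX + I(t) − I* − I* ln(I(t)/I*) + (ω/ξ₂)(C(t) − C* − C* ln(C(t)/C*)) + (σ/ξ₃)(A(t) − A* − A* ln(A(t)/A*)). Then ᶜD^α V₂(t) ≤ 0 for all t ∈ (0,T]. -/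
set_option maxHeartbeats 1600000

lemma two_le_add_inv {u : ℝ} (hu : 0 < u) : 2 - u - 1/u ≤ 0 := by
  have h := sq_nonneg (u - 1)
  have hinv : u * (1/u) = 1 := by field_simp
  nlinarith

lemma amgm3' {x y : ℝ} (hx : 0 < x) (hy : 0 < y) : x*x*y + x*(y*y) + 1 - 3*(x*y) ≥ 0 := by
  rcases le_or_gt 0 ((y-1)*(x*y-1)) with h | h
  · nlinarith [mul_nonneg (sq_nonneg (x-1)) hy.le]
  · have h2 : 0 ≤ (x-1)*(x*y-1) := by
      rcases le_or_gt 1 y with hy1 | hy1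
      · have hxy : x*y < 1 := by nlinarith
        have hx1 : x < 1 := by nlinarith
        nlinarith
      · have hxy : 1 < x*y := by nlinarith
        have hx1 : 1 < x := by
          by_contra hc; push_neg at hc; nlinarith
        nlinarith
    nlinarith [mul_nonneg (sq_nonneg (y-1)) hx.le]

lemma amgm3 {a b c : ℝ} (ha : 0 < a) (hb : 0 < b) (hc : 0 < c) :
    3 - a/b - b/c - c/a ≤ 0 := by
  have h := amgm3' (x := a/b) (y := b/c) (by positivity) (by positivity)
  have hca : c/a = 1/((a/b)*(b/c)) := by field_simp
  rw [hca]
  set x := a/b with hxd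
  set y := b/c with hyd
  have hx : 0 < x := by positivity
  have hy : 0 < y := by positivity
  have hinv : (x*y) * (1/(x*y)) = 1 := by field_simp
  nlinarith [mul_pos hx hy]

lemma sica_alg (μ ω σ φ ρ ξ₁ ξ₂ ξ₃ Λ Ss Is Cs As s i c a fv gv Fv : ℝ)
    (hμ : 0 < μ) (hω : 0 < ω) (hσ : 0 < σ)
    (hIs : 0 < Is) (hCs : 0 < Cs) (hAs : 0 < As)
    (hi : 0 < i) (hc : 0 < c) (ha : 0 < a)
    (hfv : 0 < fv) (hgv : 0 < gv) (hFv : 0 < Fv)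
    (heq1 : Λ = μ*Ss + Fv*Is) (heq2 : ξ₁*Is = Fv*Is + ω*Cs + σ*As)
    (heq3 : φ*Is = ξ₂*Cs) (heq4 : ρ*Is = ξ₃*As)
    (hξ₂ : 0 < ξ₂) (hξ₃ : 0 < ξ₃)
    (hsign : 0 ≤ (s - Ss)*(gv - Fv))
    (hH4 : (1 - fv/gv)*(gv/fv - i/Is) ≤ 0) :
    (1 - Fv/gv)*(Λ - μ*s - fv*i) + (1 - Is/i)*(fv*i - ξ₁*i + σ*a + ω*c)
    + (ω/ξ₂)*(1 - Cs/c)*(φ*i - ξ₂*c) + (σ/ξ₃)*(1 - As/a)*(ρ*i - ξ₃*a) ≤ 0 := by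
  have hΛ : Λ = μ*Ss + Fv*Is := heq1
  have hξ₁ : ξ₁ = (Fv*Is + ω*Cs + σ*As)/Is := by
    rw [eq_div_iff (ne_of_gt hIs)]; linarith
  have hφ : φ = ξ₂*Cs/Is := by rw [eq_div_iff (ne_of_gt hIs)]; linarith
  have hρ : ρ = ξ₃*As/Is := by rw [eq_div_iff (ne_of_gt hIs)]; linarith
  set u := Is*c/(Cs*i) with hu
  set v := Is*a/(As*i) with hv
  have hupos : 0 < u := by positivity
  have hvpos : 0 < v := by positivity
  have key : (1 - Fv/gv)*(Λ - μ*s - fv*i) + (1 - Is/i)*(fv*i - ξ₁*i + σ*a + ω*c)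
      + (ω/ξ₂)*(1 - Cs/c)*(φ*i - ξ₂*c) + (σ/ξ₃)*(1 - As/a)*(ρ*i - ξ₃*a)
      = -(μ*(s - Ss)*((gv - Fv)/gv))
        + Fv*Is*((3 - Fv/gv - gv/fv - fv/Fv) + (1 - fv/gv)*(gv/fv - i/Is))
        + ω*Cs*(2 - u - 1/u) + σ*As*(2 - v - 1/v) := by
    rw [hΛ, hξ₁, hφ, hρ, hu, hv]
    field_simp
    ring
  rw [key]
  have h1 : 0 ≤ μ*(s - Ss)*((gv - Fv)/gv) := by
    have : 0 ≤ (s - Ss)*(gv - Fv)/gv := by positivity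
    calc (0:ℝ) ≤ μ * ((s - Ss)*(gv - Fv)/gv) := by positivity
    _ = μ*(s - Ss)*((gv - Fv)/gv) := by ring
  have h2 : 3 - Fv/gv - gv/fv - fv/Fv ≤ 0 := amgm3 hFv hgv hfv
  have h3 : 2 - u - 1/u ≤ 0 := two_le_add_inv hupos
  have h4 : 2 - v - 1/v ≤ 0 := two_le_add_inv hvpos
  have h5 : Fv*Is*((3 - Fv/gv - gv/fv - fv/Fv) + (1 - fv/gv)*(gv/fv - i/Is)) ≤ 0 := by
    apply mul_nonpos_of_nonneg_of_nonpos (by positivity)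
    linarith
  nlinarith [mul_nonneg (mul_nonneg hω.le hCs.le) (neg_nonneg.mpr h3),
    mul_nonneg (mul_nonneg hσ.le hAs.le) (neg_nonneg.mpr h4)]

lemma tangent_log {c x y : ℝ} (hc : 0 < c) (hx : 0 < x) (hy : 0 < y) :
    0 ≤ (y - c * Real.log y) - (x - c * Real.log x) - (1 - c / x) * (y - x) := by
  have h1 : Real.log y - Real.log x ≤ (y - x) / x := by
    rw [← Real.log_div hy.ne' hx.ne']
    have h2 := Real.log_le_sub_one_of_pos (div_pos hy hx)
    have h0 : y / x - 1 = (y - x)/x := by field_simp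
    linarith
  have h3 : c * (Real.log y - Real.log x) ≤ c * ((y - x)/x) :=
    mul_le_mul_of_nonneg_left h1 hc.le
  have h4 : (c/x) * (y - x) = c * ((y-x)/x) := by ring
  nlinarith [h3, h4]

lemma tangent_S {g : ℝ → ℝ} {Ss x y : ℝ} (hSs : 0 < Ss) (hx : 0 < x) (hy : 0 < y)
    (hgc : ContinuousOn g (Set.Ioi 0)) (hmono : MonotoneOn g (Set.Ioi 0))
    (hpos : ∀ z, 0 < z → 0 < g z) :
    0 ≤ (y - (∫ X in Ss..y, g Ss / g X)) - (x - (∫ X in Ss..x, g Ss / g X))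
        - (1 - g Ss / g x) * (y - x) := by
  have hcont : ContinuousOn (fun X => g Ss / g X) (Set.Ioi 0) :=
    continuousOn_const.div hgc (fun z hz => (hpos z hz).ne')
  have hsub : ∀ a b : ℝ, 0 < a → 0 < b → Set.uIcc a b ⊆ Set.Ioi 0 := by
    intro a b ha hb z hz
    exact lt_of_lt_of_le (lt_min ha hb) hz.1
  have hint : ∀ a b : ℝ, 0 < a → 0 < b →
      IntervalIntegrable (fun X => g Ss / g X) MeasureTheory.volume a b :=
    fun a b ha hb => (hcont.mono (hsub a b ha hb)).intervalIntegrable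
  have hch : (∫ X in Ss..x, g Ss / g X) + (∫ X in x..y, g Ss / g X)
      = ∫ X in Ss..y, g Ss / g X :=
    intervalIntegral.integral_add_adjacent_intervals (hint _ _ hSs hx) (hint _ _ hx hy)
  have key : 0 ≤ (g Ss / g x) * (y - x) - ∫ X in x..y, g Ss / g X := by
    have hconst : (∫ _X in x..y, g Ss / g x) = (y - x) * (g Ss / g x) := by
      rw [intervalIntegral.integral_const]; simp [smul_eq_mul]
    rcases le_total x y with hxy | hxy
    · have hmain : 0 ≤ ∫ X in x..y, (g Ss / g x - g Ss / g X) := by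
        apply intervalIntegral.integral_nonneg hxy
        intro u hu
        have hu0 : 0 < u := lt_of_lt_of_le hx hu.1
        have hgu : g x ≤ g u := hmono (Set.mem_Ioi.mpr hx) (Set.mem_Ioi.mpr hu0) hu.1
        have h1 : g Ss / g u ≤ g Ss / g x := by
          apply div_le_div_of_nonneg_left (hpos Ss hSs).le (hpos x hx) hgu
        linarith
      rw [intervalIntegral.integral_sub (intervalIntegrable_const) (hint _ _ hx hy),
        hconst] at hmain
      linarith
    · have hmain : 0 ≤ (∫ X in y..x, (g Ss / g X - g Ss / g x)) := by
        apply intervalIntegral.integral_nonneg hxy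
        intro u hu
        have hu0 : 0 < u := lt_of_lt_of_le hy hu.1
        have hgu : g u ≤ g x := hmono (Set.mem_Ioi.mpr hu0) (Set.mem_Ioi.mpr hx) hu.2
        have h1 : g Ss / g x ≤ g Ss / g u := by
          apply div_le_div_of_nonneg_left (hpos Ss hSs).le (hpos u hu0) hgu
        linarith
      rw [intervalIntegral.integral_sub (hint _ _ hy hx) (intervalIntegrable_const)] at hmain
      have hsymm : (∫ X in x..y, g Ss / g X) = - ∫ X in y..x, g Ss / g X :=
        (intervalIntegral.integral_symm y x)
      have hconst2 : (∫ _X in y..x, g Ss / g x) = (x - y) * (g Ss / g x) := by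
        rw [intervalIntegral.integral_const]; simp [smul_eq_mul]
      rw [hconst2] at hmain
      rw [hsymm]
      nlinarith [hmain]
  have hexp : (1 - g Ss/g x)*(y-x) = (y-x) - (g Ss/g x)*(y-x) := by ring
  linarith [key, hch, hexp]

/- STATEMENT 12 -/
theorem stmt_12 (α T : ℝ) (hα0 : 0 < α) (hα1 : α < 1) (hT : 0 < T)
    (Λ μ ρ φ σ ω d ξ₁ ξ₂ ξ₃ : ℝ)
    (hΛ : 0 < Λ) (hμ : 0 < μ) (hρ : 0 < ρ) (hφ : 0 < φ) (hσ : 0 < σ)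
    (hω : 0 < ω) (hd : 0 < d)
    (hξ₁ : ξ₁ = ρ + φ + μ) (hξ₂ : ξ₂ = ω + μ) (hξ₃ : ξ₃ = σ + μ + d)
    (f : ℝ → ℝ → ℝ)
    (hf_nonneg : ∀ S I : ℝ, 0 ≤ S → 0 ≤ I → 0 ≤ f S I)
    (hf_cont : ContinuousOn (fun p : ℝ × ℝ => f p.1 p.2) (Set.Ici 0 ×ˢ Set.Ici 0))
    (hf_cd : ContDiffOn ℝ 1 (fun p : ℝ × ℝ => f p.1 p.2) (Set.Ioi 0 ×ˢ Set.Ioi 0))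
    (hH1 : ∀ I : ℝ, 0 ≤ I → f 0 I = 0)
    (hH2 : ∀ S I : ℝ, 0 < S → 0 ≤ I → 0 < deriv (fun s => f s I) S)
    (hH3 : ∀ S I : ℝ, 0 ≤ S → 0 ≤ I → deriv (fun i => f S i) I ≤ 0)
    (Sstar Istar Cstar Astar : ℝ)
    (hSstar : 0 < Sstar) (hIstar : 0 < Istar) (hCstar : 0 < Cstar) (hAstar : 0 < Astar)
    (heq1 : Λ = μ * Sstar + f Sstar Istar * Istar)
    (heq2 : ξ₁ * Istar = f Sstar Istar * Istar + ω * Cstar + σ * Astar)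
    (heq3 : φ * Istar = ξ₂ * Cstar)
    (heq4 : ρ * Istar = ξ₃ * Astar)
    (hH4 : ∀ S I : ℝ, 0 < S → 0 < I →
      (1 - f S I / f S Istar) * (f S Istar / f S I - I / Istar) ≤ 0)
    (S I C A : ℝ → ℝ)
    (hS : ContDiffOn ℝ 1 S (Set.Icc 0 T)) (hI : ContDiffOn ℝ 1 I (Set.Icc 0 T))
    (hC : ContDiffOn ℝ 1 C (Set.Icc 0 T)) (hA : ContDiffOn ℝ 1 A (Set.Icc 0 T))
    (hSpos : ∀ t ∈ Set.Icc (0:ℝ) T, 0 < S t)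
    (hIpos : ∀ t ∈ Set.Icc (0:ℝ) T, 0 < I t)
    (hCpos : ∀ t ∈ Set.Icc (0:ℝ) T, 0 < C t)
    (hApos : ∀ t ∈ Set.Icc (0:ℝ) T, 0 < A t)
    (hsys1 : ∀ t ∈ Set.Ioc (0:ℝ) T,
      caputo α S t = Λ - μ * S t - f (S t) (I t) * I t)
    (hsys2 : ∀ t ∈ Set.Ioc (0:ℝ) T,
      caputo α I t = f (S t) (I t) * I t - ξ₁ * I t + σ * A t + ω * C t)
    (hsys3 : ∀ t ∈ Set.Ioc (0:ℝ) T,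
      caputo α C t = φ * I t - ξ₂ * C t)
    (hsys4 : ∀ t ∈ Set.Ioc (0:ℝ) T,
      caputo α A t = ρ * I t - ξ₃ * A t) :
    ∀ t ∈ Set.Ioc (0:ℝ) T,
      caputo α
        (fun τ => S τ - Sstar - (∫ X in Sstar..S τ, f Sstar Istar / f X Istar)
          + (I τ - Istar - Istar * Real.log (I τ / Istar))
          + (ω / ξ₂) * (C τ - Cstar - Cstar * Real.log (C τ / Cstar))
          + (σ / ξ₃) * (A τ - Astar - Astar * Real.log (A τ / Astar))) t ≤ 0 := by
  intro t ht
  obtain ⟨ht1, ht2⟩ := ht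
  have htmemT : t ∈ Set.Icc (0:ℝ) T := ⟨ht1.le, ht2⟩
  have hsubT : Set.Icc (0:ℝ) t ⊆ Set.Icc 0 T := Set.Icc_subset_Icc le_rfl ht2
  have hξ₂pos : 0 < ξ₂ := by rw [hξ₂]; positivity
  have hξ₃pos : 0 < ξ₃ := by rw [hξ₃]; positivity
  have hΓ : 0 < Real.Gamma (1 - α) := Real.Gamma_pos_of_pos (by linarith only [hα1])
  -- monotonicity and positivity infrastructure for f
  have hcontAux : ∀ i0 : ℝ, 0 ≤ i0 → ContinuousOn (fun X => f X i0) (Set.Ici 0) := by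
    intro i0 hi0
    exact hf_cont.comp ((continuous_id.prodMk continuous_const).continuousOn)
      (fun X hX => ⟨hX, hi0⟩)
  have hmonoAux : ∀ i0 : ℝ, 0 ≤ i0 → StrictMonoOn (fun X => f X i0) (Set.Ici 0) := by
    intro i0 hi0
    apply strictMonoOn_of_deriv_pos (convex_Ici 0) (hcontAux i0 hi0)
    intro x hx
    rw [interior_Ici] at hx
    exact hH2 x i0 hx hi0
  have hposAux : ∀ i0 : ℝ, 0 ≤ i0 → ∀ s0 : ℝ, 0 < s0 → 0 < f s0 i0 := by
    intro i0 hi0 s0 hs0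
    have h0 : f 0 i0 = 0 := hH1 i0 hi0
    have := hmonoAux i0 hi0 (Set.mem_Ici.mpr le_rfl) (Set.mem_Ici.mpr hs0.le) hs0
    simpa [h0] using this
  have hgIoi : ContinuousOn (fun X => f X Istar) (Set.Ioi 0) :=
    (hcontAux Istar hIstar.le).mono Set.Ioi_subset_Ici_self
  have hgmonoIoi : MonotoneOn (fun X => f X Istar) (Set.Ioi 0) :=
    ((hmonoAux Istar hIstar.le).monotoneOn).mono Set.Ioi_subset_Ici_self
  have hgpos : ∀ z : ℝ, 0 < z → 0 < f z Istar := fun z hz => hposAux Istar hIstar.le z hz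
  -- FTC for the S-integral term
  have hFTC : ∀ y : ℝ, 0 < y →
      HasDerivAt (fun u => ∫ X in Sstar..u, f Sstar Istar / f X Istar)
        (f Sstar Istar / f y Istar) y := by
    intro y hy
    have hcontD : ContinuousOn (fun X => f Sstar Istar / f X Istar) (Set.Ioi 0) :=
      continuousOn_const.div hgIoi (fun z hz => (hgpos z hz).ne')
    have hsubI : Set.uIcc Sstar y ⊆ Set.Ioi 0 := fun z hz =>
      lt_of_lt_of_le (lt_min hSstar hy) hz.1
    exact intervalIntegral.integral_hasDerivAt_right
      ((hcontD.mono hsubI).intervalIntegrable)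
      (hcontD.stronglyMeasurableAtFilter isOpen_Ioi y hy)
      (hcontD.continuousAt (isOpen_Ioi.mem_nhds hy))
  -- derivatives within Icc 0 T
  set dS := derivWithin S (Set.Icc 0 T) with hdSdef
  set dI := derivWithin I (Set.Icc 0 T) with hdIdef
  set dC := derivWithin C (Set.Icc 0 T) with hdCdef
  set dA := derivWithin A (Set.Icc 0 T) with hdAdef
  have hSd : ∀ x ∈ Set.Icc (0:ℝ) T, HasDerivWithinAt S (dS x) (Set.Icc 0 T) x :=
    fun x hx => (hS.differentiableOn one_ne_zero x hx).hasDerivWithinAt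
  have hId : ∀ x ∈ Set.Icc (0:ℝ) T, HasDerivWithinAt I (dI x) (Set.Icc 0 T) x :=
    fun x hx => (hI.differentiableOn one_ne_zero x hx).hasDerivWithinAt
  have hCd : ∀ x ∈ Set.Icc (0:ℝ) T, HasDerivWithinAt C (dC x) (Set.Icc 0 T) x :=
    fun x hx => (hC.differentiableOn one_ne_zero x hx).hasDerivWithinAt
  have hAd : ∀ x ∈ Set.Icc (0:ℝ) T, HasDerivWithinAt A (dA x) (Set.Icc 0 T) x :=
    fun x hx => (hA.differentiableOn one_ne_zero x hx).hasDerivWithinAt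
  have hdSc : ContinuousOn dS (Set.Icc 0 T) :=
    hS.continuousOn_derivWithin (uniqueDiffOn_Icc hT) le_rfl
  have hdIc : ContinuousOn dI (Set.Icc 0 T) :=
    hI.continuousOn_derivWithin (uniqueDiffOn_Icc hT) le_rfl
  have hdCc : ContinuousOn dC (Set.Icc 0 T) :=
    hC.continuousOn_derivWithin (uniqueDiffOn_Icc hT) le_rfl
  have hdAc : ContinuousOn dA (Set.Icc 0 T) :=
    hA.continuousOn_derivWithin (uniqueDiffOn_Icc hT) le_rfl
  -- the Lyapunov function
  set V : ℝ → ℝ := fun τ => S τ - Sstar - (∫ X in Sstar..S τ, f Sstar Istar / f X Istar)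
      + (I τ - Istar - Istar * Real.log (I τ / Istar))
      + (ω / ξ₂) * (C τ - Cstar - Cstar * Real.log (C τ / Cstar))
      + (σ / ξ₃) * (A τ - Astar - Astar * Real.log (A τ / Astar)) with hVdef
  set P : ℝ → ℝ := fun x => (1 - f Sstar Istar / f (S x) Istar) * dS x
      + (1 - Istar / I x) * dI x + ω / ξ₂ * ((1 - Cstar / C x) * dC x)
      + σ / ξ₃ * ((1 - Astar / A x) * dA x) with hPdef
  have hVd : ∀ x ∈ Set.Icc (0:ℝ) T, HasDerivWithinAt V (P x) (Set.Icc 0 T) x := by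
    intro x hx
    have hSx := hSpos x hx
    have hIx := hIpos x hx
    have hCx := hCpos x hx
    have hAx := hApos x hx
    have h1 : HasDerivWithinAt
        (fun τ => S τ - Sstar - ∫ X in Sstar..S τ, f Sstar Istar / f X Istar)
        ((1 - f Sstar Istar / f (S x) Istar) * dS x) (Set.Icc 0 T) x := by
      have ha := (hSd x hx).sub_const Sstar
      have hb := (hFTC (S x) hSx).comp_hasDerivWithinAt x (hSd x hx)
      have hres := ha.sub hb
      refine hres.congr_deriv ?_
      ring
    have h2 : HasDerivWithinAt (fun τ => I τ - Istar - Istar * Real.log (I τ / Istar))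
        ((1 - Istar / I x) * dI x) (Set.Icc 0 T) x := by
      have hlog : HasDerivWithinAt (fun τ => Real.log (I τ / Istar))
          ((I x / Istar)⁻¹ * (dI x / Istar)) (Set.Icc 0 T) x :=
        by have hh := (Real.hasDerivAt_log (by positivity : I x / Istar ≠ 0)).comp_hasDerivWithinAt x
            ((hId x hx).div_const Istar)
           exact hh
      have hres := ((hId x hx).sub_const Istar).sub (hlog.const_mul Istar)
      refine hres.congr_deriv ?_
      field_simp
    have h3 : HasDerivWithinAt (fun τ => ω / ξ₂ * (C τ - Cstar - Cstar * Real.log (C τ / Cstar)))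
        (ω / ξ₂ * ((1 - Cstar / C x) * dC x)) (Set.Icc 0 T) x := by
      have hlog : HasDerivWithinAt (fun τ => Real.log (C τ / Cstar))
          ((C x / Cstar)⁻¹ * (dC x / Cstar)) (Set.Icc 0 T) x :=
        by have hh := (Real.hasDerivAt_log (by positivity : C x / Cstar ≠ 0)).comp_hasDerivWithinAt x
            ((hCd x hx).div_const Cstar)
           exact hh
      have hres := (((hCd x hx).sub_const Cstar).sub (hlog.const_mul Cstar)).const_mul (ω / ξ₂)
      refine hres.congr_deriv ?_
      field_simp
    have h4 : HasDerivWithinAt (fun τ => σ / ξ₃ * (A τ - Astar - Astar * Real.log (A τ / Astar)))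
        (σ / ξ₃ * ((1 - Astar / A x) * dA x)) (Set.Icc 0 T) x := by
      have hlog : HasDerivWithinAt (fun τ => Real.log (A τ / Astar))
          ((A x / Astar)⁻¹ * (dA x / Astar)) (Set.Icc 0 T) x :=
        by have hh := (Real.hasDerivAt_log (by positivity : A x / Astar ≠ 0)).comp_hasDerivWithinAt x
            ((hAd x hx).div_const Astar)
           exact hh
      have hres := (((hAd x hx).sub_const Astar).sub (hlog.const_mul Astar)).const_mul (σ / ξ₃)
      refine hres.congr_deriv ?_
      field_simp
    exact ((h1.add h2).add h3).add h4
  -- continuity of P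
  have hgSc : ContinuousOn (fun x => f (S x) Istar) (Set.Icc 0 T) :=
    (hcontAux Istar hIstar.le).comp hS.continuousOn (fun x hx => (hSpos x hx).le)
  have hPc : ContinuousOn P (Set.Icc 0 T) := by
    rw [hPdef]
    apply ContinuousOn.add
    apply ContinuousOn.add
    apply ContinuousOn.add
    · exact (continuousOn_const.sub (continuousOn_const.div hgSc
        (fun x hx => (hgpos _ (hSpos x hx)).ne'))).mul hdSc
    · exact (continuousOn_const.sub (continuousOn_const.div hI.continuousOn
        (fun x hx => (hIpos x hx).ne'))).mul hdIc
    · exact continuousOn_const.mul ((continuousOn_const.sub (continuousOn_const.div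
        hC.continuousOn (fun x hx => (hCpos x hx).ne'))).mul hdCc)
    · exact continuousOn_const.mul ((continuousOn_const.sub (continuousOn_const.div
        hA.continuousOn (fun x hx => (hApos x hx).ne'))).mul hdAc)
  -- tangent coefficients at time t
  set c₁ := 1 - f Sstar Istar / f (S t) Istar with hc1def
  set c₂ := 1 - Istar / I t with hc2def
  set c₃ := ω / ξ₂ * (1 - Cstar / C t) with hc3def
  set c₄ := σ / ξ₃ * (1 - Astar / A t) with hc4def
  set Q : ℝ → ℝ := fun x => c₁ * dS x + c₂ * dI x + c₃ * dC x + c₄ * dA x with hQdef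
  have hQc : ContinuousOn Q (Set.Icc 0 T) := by
    rw [hQdef]
    exact (((hdSc.const_smul c₁).add (hdIc.const_smul c₂)).add
      (hdCc.const_smul c₃)).add (hdAc.const_smul c₄)
  set Lf : ℝ → ℝ := fun τ => c₁ * S τ + c₂ * I τ + c₃ * C τ + c₄ * A τ with hLfdef
  have hLd : ∀ x ∈ Set.Icc (0:ℝ) T, HasDerivWithinAt Lf (Q x) (Set.Icc 0 T) x := by
    intro x hx
    exact (((((hSd x hx).const_mul c₁).add ((hId x hx).const_mul c₂)).add
      ((hCd x hx).const_mul c₃)).add ((hAd x hx).const_mul c₄))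
  set W : ℝ → ℝ := fun s_ => V s_ - Lf s_ - (V t - Lf t) with hWdef
  have hWd : ∀ x ∈ Set.Icc (0:ℝ) T, HasDerivWithinAt W (P x - Q x) (Set.Icc 0 T) x :=
    fun x hx => ((hVd x hx).sub (hLd x hx)).sub_const _
  have hWt : W t = 0 := by rw [hWdef]; ring
  -- nonnegativity of W on [0, t]
  have hWnonneg : ∀ s_ ∈ Set.Icc (0:ℝ) t, 0 ≤ W s_ := by
    intro s_ hs_
    have hs_T : s_ ∈ Set.Icc (0:ℝ) T := hsubT hs_
    have hSs_ := hSpos s_ hs_T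
    have hIs_ := hIpos s_ hs_T
    have hCs_ := hCpos s_ hs_T
    have hAs_ := hApos s_ hs_T
    have hSt := hSpos t htmemT
    have hIt := hIpos t htmemT
    have hCt := hCpos t htmemT
    have hAt := hApos t htmemT
    have e1 : 0 ≤ (S s_ - (∫ X in Sstar..S s_, f Sstar Istar / f X Istar))
        - (S t - (∫ X in Sstar..S t, f Sstar Istar / f X Istar))
        - (1 - f Sstar Istar / f (S t) Istar) * (S s_ - S t) :=
      tangent_S (g := fun X => f X Istar) hSstar hSt hSs_ hgIoi hgmonoIoi hgpos
    have e2 : 0 ≤ (I s_ - Istar * Real.log (I s_)) - (I t - Istar * Real.log (I t))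
        - (1 - Istar / I t) * (I s_ - I t) := tangent_log hIstar hIt hIs_
    have e3 : 0 ≤ (C s_ - Cstar * Real.log (C s_)) - (C t - Cstar * Real.log (C t))
        - (1 - Cstar / C t) * (C s_ - C t) := tangent_log hCstar hCt hCs_
    have e4 : 0 ≤ (A s_ - Astar * Real.log (A s_)) - (A t - Astar * Real.log (A t))
        - (1 - Astar / A t) * (A s_ - A t) := tangent_log hAstar hAt hAs_
    have e3' : 0 ≤ ω / ξ₂ * ((C s_ - Cstar * Real.log (C s_)) - (C t - Cstar * Real.log (C t))
        - (1 - Cstar / C t) * (C s_ - C t)) := mul_nonneg (by positivity) e3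
    have e4' : 0 ≤ σ / ξ₃ * ((A s_ - Astar * Real.log (A s_)) - (A t - Astar * Real.log (A t))
        - (1 - Astar / A t) * (A s_ - A t)) := mul_nonneg (by positivity) e4
    have hexpand : W s_ = ((S s_ - (∫ X in Sstar..S s_, f Sstar Istar / f X Istar))
        - (S t - (∫ X in Sstar..S t, f Sstar Istar / f X Istar))
        - (1 - f Sstar Istar / f (S t) Istar) * (S s_ - S t))
        + ((I s_ - Istar * Real.log (I s_)) - (I t - Istar * Real.log (I t))
          - (1 - Istar / I t) * (I s_ - I t))
        + ω / ξ₂ * ((C s_ - Cstar * Real.log (C s_)) - (C t - Cstar * Real.log (C t))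
          - (1 - Cstar / C t) * (C s_ - C t))
        + σ / ξ₃ * ((A s_ - Astar * Real.log (A s_)) - (A t - Astar * Real.log (A t))
          - (1 - Astar / A t) * (A s_ - A t)) := by
      rw [hWdef, hVdef, hLfdef, hc1def, hc2def, hc3def, hc4def]
      simp only [Real.log_div hIs_.ne' hIstar.ne', Real.log_div hIt.ne' hIstar.ne',
        Real.log_div hCs_.ne' hCstar.ne', Real.log_div hCt.ne' hCstar.ne',
        Real.log_div hAs_.ne' hAstar.ne', Real.log_div hAt.ne' hAstar.ne']
      ring
    rw [hexpand]
    linarith only [e1, e2, e3', e4']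
  -- bound on P - Q
  obtain ⟨M, hM⟩ := IsCompact.exists_bound_of_continuousOn isCompact_Icc (hPc.sub hQc)
  have hM' : ∀ x ∈ Set.Icc (0:ℝ) T, P x - Q x ≤ M := by
    intro x hx
    have h := hM x hx
    rw [Real.norm_eq_abs] at h
    exact (abs_le.mp h).2
  have hM0 : 0 ≤ M := le_trans (norm_nonneg _) (hM 0 ⟨le_rfl, hT.le⟩)
  -- integrability
  have hKint : IntervalIntegrable (fun x => (t - x) ^ (-α)) MeasureTheory.volume 0 t := by
    have h := intervalIntegral.intervalIntegrable_rpow' (a := 0) (b := t) (r := -α)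
      (by linarith only [hα1])
    have h2 := (h.comp_sub_left t).symm
    simpa using h2
  have hmulK : ∀ φf : ℝ → ℝ, ContinuousOn φf (Set.Icc 0 t) →
      IntervalIntegrable (fun x => φf x * (t - x) ^ (-α)) MeasureTheory.volume 0 t := by
    intro φf hφ
    apply hKint.continuousOn_mul
    rwa [Set.uIcc_of_le ht1.le]
  have hPK := hmulK P (hPc.mono hsubT)
  have hQK := hmulK Q (hQc.mono hsubT)
  have hWK := hmulK (fun x => P x - Q x) ((hPc.sub hQc).mono hsubT)
  have hdSK := hmulK dS (hdSc.mono hsubT)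
  have hdIK := hmulK dI (hdIc.mono hsubT)
  have hdCK := hmulK dC (hdCc.mono hsubT)
  have hdAK := hmulK dA (hdAc.mono hsubT)
  -- a.e. replacement of deriv by explicit derivative
  have hcongr : ∀ φf dφ : ℝ → ℝ,
      (∀ x ∈ Set.Icc (0:ℝ) T, HasDerivWithinAt φf (dφ x) (Set.Icc 0 T) x) →
      (∫ x in (0:ℝ)..t, deriv φf x * (t - x) ^ (-α))
        = ∫ x in (0:ℝ)..t, dφ x * (t - x) ^ (-α) := by
    intro φf dφ hd
    apply intervalIntegral.integral_congr_ae
    apply MeasureTheory.ae_of_all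
    intro x hx
    rw [Set.uIoc_of_le ht1.le] at hx
    rcases eq_or_lt_of_le hx.2 with hxt | hxt
    · rw [hxt]
      simp [Real.zero_rpow (neg_ne_zero.mpr hα0.ne')]
    · have hxT : x ∈ Set.Icc (0:ℝ) T := ⟨hx.1.le, by linarith only [hxt, ht2]⟩
      have hda : HasDerivAt φf (dφ x) x :=
        (hd x hxT).hasDerivAt (Icc_mem_nhds hx.1 (lt_of_lt_of_le hxt ht2))
      rw [hda.deriv]
  -- caputo values of the components
  have hSint : (∫ x in (0:ℝ)..t, dS x * (t - x) ^ (-α))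
      = Real.Gamma (1 - α) * (Λ - μ * S t - f (S t) (I t) * I t) := by
    have h1 := hsys1 t ⟨ht1, ht2⟩
    simp only [caputo] at h1
    rw [← hcongr S dS hSd]
    field_simp at h1
    linarith only [h1]
  have hIint : (∫ x in (0:ℝ)..t, dI x * (t - x) ^ (-α))
      = Real.Gamma (1 - α) * (f (S t) (I t) * I t - ξ₁ * I t + σ * A t + ω * C t) := by
    have h1 := hsys2 t ⟨ht1, ht2⟩
    simp only [caputo] at h1
    rw [← hcongr I dI hId]
    field_simp at h1
    linarith only [h1]
  have hCint : (∫ x in (0:ℝ)..t, dC x * (t - x) ^ (-α))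
      = Real.Gamma (1 - α) * (φ * I t - ξ₂ * C t) := by
    have h1 := hsys3 t ⟨ht1, ht2⟩
    simp only [caputo] at h1
    rw [← hcongr C dC hCd]
    field_simp at h1
    linarith only [h1]
  have hAint : (∫ x in (0:ℝ)..t, dA x * (t - x) ^ (-α))
      = Real.Gamma (1 - α) * (ρ * I t - ξ₃ * A t) := by
    have h1 := hsys4 t ⟨ht1, ht2⟩
    simp only [caputo] at h1
    rw [← hcongr A dA hAd]
    field_simp at h1
    linarith only [h1]
  -- split ∫ P K into Q-part and W-part
  have hsplit : (∫ x in (0:ℝ)..t, P x * (t - x) ^ (-α))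
      = (∫ x in (0:ℝ)..t, Q x * (t - x) ^ (-α))
        + ∫ x in (0:ℝ)..t, (P x - Q x) * (t - x) ^ (-α) := by
    rw [← intervalIntegral.integral_add hQK hWK]
    congr 1
    funext x
    ring
  have hQsplit : (∫ x in (0:ℝ)..t, Q x * (t - x) ^ (-α))
      = c₁ * (∫ x in (0:ℝ)..t, dS x * (t - x) ^ (-α))
        + c₂ * (∫ x in (0:ℝ)..t, dI x * (t - x) ^ (-α))
        + c₃ * (∫ x in (0:ℝ)..t, dC x * (t - x) ^ (-α))
        + c₄ * (∫ x in (0:ℝ)..t, dA x * (t - x) ^ (-α)) := by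
    have hfe : (fun x => Q x * (t - x) ^ (-α))
        = fun x => c₁ * (dS x * (t - x) ^ (-α)) + c₂ * (dI x * (t - x) ^ (-α))
          + (c₃ * (dC x * (t - x) ^ (-α)) + c₄ * (dA x * (t - x) ^ (-α))) := by
      funext x
      rw [hQdef]
      ring
    rw [hfe, intervalIntegral.integral_add ((hdSK.const_mul c₁).add (hdIK.const_mul c₂))
        ((hdCK.const_mul c₃).add (hdAK.const_mul c₄)),
      intervalIntegral.integral_add (hdSK.const_mul c₁) (hdIK.const_mul c₂),
      intervalIntegral.integral_add (hdCK.const_mul c₃) (hdAK.const_mul c₄),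
      intervalIntegral.integral_const_mul, intervalIntegral.integral_const_mul,
      intervalIntegral.integral_const_mul, intervalIntegral.integral_const_mul]
    ring
  -- the key limit inequality: ∫ (P - Q) K ≤ 0
  have hlimit : (∫ x in (0:ℝ)..t, (P x - Q x) * (t - x) ^ (-α)) ≤ 0 := by
    have hboundn : ∀ n : ℕ, (∫ x in (0:ℝ)..t, (P x - Q x) * (t - x) ^ (-α))
        ≤ M * ((t ^ (-α + 1) - (t - t / (n + 2)) ^ (-α + 1)) / (-α + 1))
          + M * (t / (n + 2)) ^ (-α + 1) + M * ((t / (n + 2)) ^ (-α + 1) / (-α + 1)) := by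
      intro n
      set ε := t / ((n : ℝ) + 2) with hεdef
      have hεpos : 0 < ε := by positivity
      have hn2 : (2:ℝ) ≤ (n:ℝ) + 2 := by
        have h00 : (0:ℝ) ≤ (n:ℝ) := Nat.cast_nonneg n
        linarith only [h00]
      have hε2 : ε ≤ t / 2 := by
        rw [hεdef]
        exact div_le_div_of_nonneg_left ht1.le (by norm_num) hn2
      have hεt : ε ≤ t - ε := by linarith only [hε2]
      have hεltt : ε < t := by linarith only [hε2, ht1]
      have hsub1 : Set.uIcc (0:ℝ) ε ⊆ Set.uIcc 0 t := by
        rw [Set.uIcc_of_le hεpos.le, Set.uIcc_of_le ht1.le]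
        exact Set.Icc_subset_Icc le_rfl hεltt.le
      have hsubεt : Set.uIcc ε t ⊆ Set.uIcc 0 t := by
        rw [Set.uIcc_of_le hεltt.le, Set.uIcc_of_le ht1.le]
        exact Set.Icc_subset_Icc hεpos.le le_rfl
      have hsub2 : Set.uIcc ε (t - ε) ⊆ Set.uIcc 0 t := by
        rw [Set.uIcc_of_le hεt, Set.uIcc_of_le ht1.le]
        exact Set.Icc_subset_Icc hεpos.le (by linarith only [hεpos])
      have hsub3 : Set.uIcc (t - ε) t ⊆ Set.uIcc 0 t := by
        rw [Set.uIcc_of_le (by linarith only [hεpos] : t - ε ≤ t), Set.uIcc_of_le ht1.le]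
        exact Set.Icc_subset_Icc (by linarith only [hε2, ht1]) le_rfl
      have hch1 := intervalIntegral.integral_add_adjacent_intervals
        (hWK.mono_set hsub1) (hWK.mono_set hsubεt)
      have hch2 := intervalIntegral.integral_add_adjacent_intervals
        (hWK.mono_set hsub2) (hWK.mono_set hsub3)
      -- piece 1
      have hb1 : (∫ x in (0:ℝ)..ε, (P x - Q x) * (t - x) ^ (-α))
          ≤ M * ((t ^ (-α + 1) - (t - ε) ^ (-α + 1)) / (-α + 1)) := by
        have hmono : (∫ x in (0:ℝ)..ε, (P x - Q x) * (t - x) ^ (-α))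
            ≤ ∫ x in (0:ℝ)..ε, M * (t - x) ^ (-α) := by
          apply intervalIntegral.integral_mono_on hεpos.le (hWK.mono_set hsub1)
            ((hKint.mono_set hsub1).const_mul M)
          intro x hx
          have hxT : x ∈ Set.Icc (0:ℝ) T := ⟨hx.1, by linarith only [hx.2, hεltt, ht2]⟩
          have hK0 : (0:ℝ) ≤ (t - x) ^ (-α) :=
            Real.rpow_nonneg (by linarith only [hx.2, hεltt]) _
          exact mul_le_mul_of_nonneg_right (hM' x hxT) hK0
        have hval : (∫ x in (0:ℝ)..ε, M * (t - x) ^ (-α))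
            = M * ((t ^ (-α + 1) - (t - ε) ^ (-α + 1)) / (-α + 1)) := by
          rw [intervalIntegral.integral_const_mul]
          congr 1
          have hcomp := intervalIntegral.integral_comp_sub_left
            (a := (0:ℝ)) (b := ε) (fun x => x ^ (-α)) t
          rw [hcomp, integral_rpow (Or.inl (by linarith only [hα1]))]
          norm_num
        linarith only [hmono, hval]
      -- piece 3
      have hb3 : (∫ x in (t - ε)..t, (P x - Q x) * (t - x) ^ (-α))
          ≤ M * ((ε ^ (-α + 1)) / (-α + 1)) := by
        have hmono : (∫ x in (t - ε)..t, (P x - Q x) * (t - x) ^ (-α))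
            ≤ ∫ x in (t - ε)..t, M * (t - x) ^ (-α) := by
          apply intervalIntegral.integral_mono_on (by linarith only [hεpos])
            (hWK.mono_set hsub3) ((hKint.mono_set hsub3).const_mul M)
          intro x hx
          have hxT : x ∈ Set.Icc (0:ℝ) T :=
            ⟨by linarith only [hx.1, hε2, ht1], by linarith only [hx.2, ht2]⟩
          have hK0 : (0:ℝ) ≤ (t - x) ^ (-α) := Real.rpow_nonneg (by linarith only [hx.2]) _
          exact mul_le_mul_of_nonneg_right (hM' x hxT) hK0
        have hval : (∫ x in (t - ε)..t, M * (t - x) ^ (-α))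
            = M * ((ε ^ (-α + 1)) / (-α + 1)) := by
          rw [intervalIntegral.integral_const_mul]
          congr 1
          have hcomp := intervalIntegral.integral_comp_sub_left
            (a := t - ε) (b := t) (fun x => x ^ (-α)) t
          have h0 : t - t = 0 := sub_self t
          have h1 : t - (t - ε) = ε := by ring
          rw [hcomp, h0, h1, integral_rpow (Or.inl (by linarith only [hα1]))]
          rw [Real.zero_rpow (by linarith only [hα1] : (0:ℝ) < -α + 1).ne']
          ring
        linarith only [hmono, hval]
      -- piece 2 via integration by parts
      have hb2 : (∫ x in ε..(t - ε), (P x - Q x) * (t - x) ^ (-α)) ≤ M * ε ^ (-α + 1) := by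
        have hIcc2 : Set.uIcc ε (t - ε) = Set.Icc ε (t - ε) := Set.uIcc_of_le hεt
        have hWder : ∀ x ∈ Set.uIcc ε (t - ε), HasDerivAt W (P x - Q x) x := by
          intro x hx
          rw [hIcc2] at hx
          have hx0 : 0 < x := lt_of_lt_of_le hεpos hx.1
          have hxT : x < T := lt_of_le_of_lt hx.2 (lt_of_lt_of_le (by linarith only [hεpos]) ht2)
          exact (hWd x ⟨hx0.le, hxT.le⟩).hasDerivAt (Icc_mem_nhds hx0 hxT)
        have hKder : ∀ x ∈ Set.uIcc ε (t - ε),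
            HasDerivAt (fun y => (t - y) ^ (-α)) (-α * (t - x) ^ (-α - 1) * -1) x := by
          intro x hx
          rw [hIcc2] at hx
          have htx : t - x ≠ 0 := ne_of_gt (by linarith only [hx.2, hεpos])
          have h1 := Real.hasDerivAt_rpow_const (x := t - x) (p := -α) (Or.inl htx)
          have h2 : HasDerivAt (fun y : ℝ => t - y) (-1) x := (hasDerivAt_id x).const_sub t
          exact h1.comp x h2
        have hKdint : IntervalIntegrable (fun x => -α * (t - x) ^ (-α - 1) * -1)
            MeasureTheory.volume ε (t - ε) := by
          apply ContinuousOn.intervalIntegrable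
          apply ContinuousOn.mul _ continuousOn_const
          apply ContinuousOn.mul continuousOn_const
          apply ContinuousOn.rpow_const
          · exact (continuous_const.sub continuous_id).continuousOn
          · intro x hx
            rw [hIcc2] at hx
            exact Or.inl (ne_of_gt (by linarith only [hx.2, hεpos]))
        have hPQsub : IntervalIntegrable (fun x => P x - Q x) MeasureTheory.volume ε (t - ε) := by
          apply ContinuousOn.intervalIntegrable
          apply (hPc.sub hQc).mono
          rw [Set.uIcc_of_le hεt]
          exact fun x hx => ⟨by linarith only [hx.1, hεpos], by linarith only [hx.2, hεpos, ht2]⟩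
        have hibp := intervalIntegral.integral_mul_deriv_eq_deriv_mul hWder hKder
          hPQsub hKdint
        have hWKd_nonneg : 0 ≤ ∫ x in ε..(t - ε), W x * (-α * (t - x) ^ (-α - 1) * -1) := by
          apply intervalIntegral.integral_nonneg hεt
          intro u hu
          have hu0t : u ∈ Set.Icc (0:ℝ) t :=
            ⟨by linarith only [hu.1, hεpos], by linarith only [hu.2, hεpos]⟩
          have hkd : 0 ≤ -α * (t - u) ^ (-α - 1) * -1 := by
            have h0 : (0:ℝ) ≤ (t - u) ^ (-α - 1) :=
              Real.rpow_nonneg (by linarith only [hu.2, hεpos]) _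
            have hre : -α * (t - u) ^ (-α - 1) * -1 = α * (t - u) ^ (-α - 1) := by ring
            rw [hre]
            exact mul_nonneg hα0.le h0
          exact mul_nonneg (hWnonneg u hu0t) hkd
        have hWε : 0 ≤ W ε * (t - ε) ^ (-α) :=
          mul_nonneg (hWnonneg ε ⟨hεpos.le, hεltt.le⟩)
            (Real.rpow_nonneg (by linarith only [hεltt]) _)
        -- MVT bound near t
        have hMVT : ‖W (t - ε) - W t‖ ≤ M * ‖(t - ε) - t‖ := by
          apply (convex_Icc (t - ε) t).norm_image_sub_le_of_norm_hasDerivWithin_le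
            (f' := fun x => P x - Q x)
            (fun x hx => (hWd x ⟨by linarith only [hx.1, hε2, ht1],
                by linarith only [hx.2, ht2]⟩).mono
              (Set.Icc_subset_Icc (by linarith only [hε2, ht1]) ht2))
            (fun x hx => hM x ⟨by linarith only [hx.1, hε2, ht1],
              by linarith only [hx.2, ht2]⟩)
            ⟨by linarith only [hεpos], le_rfl⟩ ⟨le_rfl, by linarith only [hεpos]⟩
        have hWtε : W (t - ε) ≤ M * ε := by
          rw [hWt, sub_zero] at hMVT
          have h1 : ‖(t - ε) - t‖ = ε := by
            rw [Real.norm_eq_abs, abs_of_nonpos (by linarith only [hεpos])]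
            ring
          rw [h1] at hMVT
          calc W (t - ε) ≤ ‖W (t - ε)‖ := by
                rw [Real.norm_eq_abs]; exact le_abs_self _
          _ ≤ M * ε := hMVT
        have hKtε : (t - (t - ε)) ^ (-α) = ε ^ (-α) := by
          congr 1
          ring
        have hεexp : ε ^ (-α + 1) = ε ^ (-α) * ε := Real.rpow_add_one hεpos.ne' (-α)
        have hstep : (∫ x in ε..(t - ε), (P x - Q x) * (t - x) ^ (-α))
            = W (t - ε) * (t - (t - ε)) ^ (-α) - W ε * (t - ε) ^ (-α)
              - ∫ x in ε..(t - ε), W x * (-α * (t - x) ^ (-α - 1) * -1) := by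
          linarith only [hibp]
        rw [hstep, hKtε]
        have hKε0 : (0:ℝ) ≤ ε ^ (-α) := Real.rpow_nonneg hεpos.le _
        have : W (t - ε) * ε ^ (-α) ≤ (M * ε) * ε ^ (-α) :=
          mul_le_mul_of_nonneg_right hWtε hKε0
        rw [hεexp]
        linarith only [this, hWε, hWKd_nonneg]
      -- combine
      have htotal : (∫ x in (0:ℝ)..t, (P x - Q x) * (t - x) ^ (-α))
          = (∫ x in (0:ℝ)..ε, (P x - Q x) * (t - x) ^ (-α))
            + (∫ x in ε..(t - ε), (P x - Q x) * (t - x) ^ (-α))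
            + ∫ x in (t - ε)..t, (P x - Q x) * (t - x) ^ (-α) := by
        linarith only [hch1, hch2]
      rw [htotal]
      have hfin := add_le_add (add_le_add hb1 hb2) hb3
      linarith only [hfin]
    -- the bound tends to 0
    have he : Filter.Tendsto (fun n : ℕ => t / ((n : ℝ) + 2)) Filter.atTop (nhds 0) := by
      apply Filter.Tendsto.div_atTop tendsto_const_nhds
      exact Filter.tendsto_atTop_add_const_right _ 2 tendsto_natCast_atTop_atTop
    have hrp0 : Filter.Tendsto (fun n : ℕ => (t / ((n : ℝ) + 2)) ^ (-α + 1))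
        Filter.atTop (nhds 0) := by
      have hc := (Real.continuousAt_rpow_const 0 (-α + 1) (Or.inr (by linarith only [hα1]))).tendsto
      have h2 := hc.comp he
      simpa [Function.comp_def, Real.zero_rpow (show -α + 1 ≠ 0 by linarith)] using h2
    have hrp1 : Filter.Tendsto (fun n : ℕ => (t - t / ((n : ℝ) + 2)) ^ (-α + 1))
        Filter.atTop (nhds (t ^ (-α + 1))) := by
      have hsubt : Filter.Tendsto (fun n : ℕ => t - t / ((n : ℝ) + 2))
          Filter.atTop (nhds t) := by
        have := (tendsto_const_nhds (x := t) (f := Filter.atTop (α := ℕ))).sub he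
        simpa using this
      have hc := (Real.continuousAt_rpow_const t (-α + 1) (Or.inl ht1.ne')).tendsto
      exact hc.comp hsubt
    have hA' : Filter.Tendsto (fun n : ℕ =>
        M * ((t ^ (-α + 1) - (t - t / ((n : ℝ) + 2)) ^ (-α + 1)) / (-α + 1)))
        Filter.atTop (nhds (M * ((t ^ (-α + 1) - t ^ (-α + 1)) / (-α + 1)))) :=
      (((tendsto_const_nhds.sub hrp1).div_const (-α + 1)).const_mul M)
    have hB' : Filter.Tendsto (fun n : ℕ => M * (t / ((n : ℝ) + 2)) ^ (-α + 1))
        Filter.atTop (nhds (M * 0)) := hrp0.const_mul M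
    have hC' : Filter.Tendsto (fun n : ℕ => M * ((t / ((n : ℝ) + 2)) ^ (-α + 1) / (-α + 1)))
        Filter.atTop (nhds (M * (0 / (-α + 1)))) := (hrp0.div_const (-α + 1)).const_mul M
    have htend := (hA'.add hB').add hC'
    have hzero : M * ((t ^ (-α + 1) - t ^ (-α + 1)) / (-α + 1)) + M * 0
        + M * (0 / (-α + 1)) = 0 := by
      simp
    rw [hzero] at htend
    exact ge_of_tendsto htend (Filter.Eventually.of_forall hboundn)
  -- conclusion
  have hsign : 0 ≤ (S t - Sstar) * (f (S t) Istar - f Sstar Istar) := by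
    have hStmem : S t ∈ Set.Ici (0:ℝ) := Set.mem_Ici.mpr (hSpos t htmemT).le
    have hSsmem : Sstar ∈ Set.Ici (0:ℝ) := Set.mem_Ici.mpr hSstar.le
    rcases lt_trichotomy (S t) Sstar with h | h | h
    · have h2 := hmonoAux Istar hIstar.le hStmem hSsmem h
      simp only at h2
      nlinarith only [h, h2]
    · rw [h]; simp
    · have h2 := hmonoAux Istar hIstar.le hSsmem hStmem h
      simp only at h2
      nlinarith only [h, h2]
  have halg := sica_alg μ ω σ φ ρ ξ₁ ξ₂ ξ₃ Λ Sstar Istar Cstar Astar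
    (S t) (I t) (C t) (A t) (f (S t) (I t)) (f (S t) Istar) (f Sstar Istar)
    hμ hω hσ hIstar hCstar hAstar (hIpos t htmemT) (hCpos t htmemT) (hApos t htmemT)
    (hposAux (I t) (hIpos t htmemT).le (S t) (hSpos t htmemT))
    (hgpos (S t) (hSpos t htmemT)) (hposAux Istar hIstar.le Sstar hSstar)
    heq1 heq2 heq3 heq4 hξ₂pos hξ₃pos hsign
    (hH4 (S t) (I t) (hSpos t htmemT) (hIpos t htmemT))
  have hD : c₁ * (Λ - μ * S t - f (S t) (I t) * I t)
      + c₂ * (f (S t) (I t) * I t - ξ₁ * I t + σ * A t + ω * C t)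
      + c₃ * (φ * I t - ξ₂ * C t) + c₄ * (ρ * I t - ξ₃ * A t) ≤ 0 := by
    rw [hc1def, hc2def, hc3def, hc4def]
    exact halg
  have hΓD := mul_nonpos_of_nonneg_of_nonpos hΓ.le hD
  simp only [caputo]
  rw [hcongr V P hVd, hsplit, hQsplit, hSint, hIint, hCint, hAint]
  apply mul_nonpos_of_nonneg_of_nonpos (by positivity)
  linarith only [hΓD, hlimit]
end

section
/- Let 0 < α < 1, assume the SICA parameters are positive and the incidence function f satisfies (H1)–(H3). Let (S,I,C,A) be a solution of the fractional SICA system on [0,∞) with S, I, C, A nonnegative. Then the total population N(t) = S(t) + I(t) + C(t) + A(t) satisfies ᶜD^α N(t) ≤ Λ − μN(t) for all t > 0, and consequently N(t) ≤ N(0) + Λ/μ for all t ≥ 0. -/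
open Set MeasureTheory Filter Topology

section CaputoAux

variable {α : ℝ}

private lemma weight_ii (hα1 : α < 1) (t a b : ℝ) :
    IntervalIntegrable (fun x => (t - x) ^ (-α)) volume a b := by
  have h := (intervalIntegral.intervalIntegrable_rpow' (r := -α) (by linarith)
      (a := t - a) (b := t - b)).comp_sub_left t
  simpa using h

private lemma dEqW {g : ℝ → ℝ} {x : ℝ} (hx : 0 < x) :
    derivWithin g (Ici 0) x = deriv g x :=
  derivWithin_of_mem_nhds (Ici_mem_nhds hx)

private lemma diffAt {g : ℝ → ℝ} (hg : ContDiffOn ℝ 1 g (Ici 0)) {x : ℝ} (hx : 0 < x) :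
    DifferentiableAt ℝ g x :=
  (hg.differentiableOn one_ne_zero).differentiableAt (Ici_mem_nhds hx)

private lemma exists_deriv_bound {g : ℝ → ℝ} (hg : ContDiffOn ℝ 1 g (Ici 0)) (t : ℝ) :
    ∃ M : ℝ, 0 ≤ M ∧ ∀ x ∈ Ioc (0:ℝ) t, |deriv g x| ≤ M := by
  have hc : ContinuousOn (derivWithin g (Ici 0)) (Icc 0 t) :=
    (hg.continuousOn_derivWithin (uniqueDiffOn_Ici 0) le_rfl).mono Icc_subset_Ici_self
  obtain ⟨M0, hM0⟩ := isCompact_Icc.exists_bound_of_continuousOn hc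
  refine ⟨max M0 0, le_max_right _ _, fun x hx => ?_⟩
  rw [← dEqW hx.1]
  calc |derivWithin g (Ici 0) x| ≤ M0 := by
        simpa [Real.norm_eq_abs] using hM0 x ⟨hx.1.le, hx.2⟩
    _ ≤ max M0 0 := le_max_left _ _

private lemma deriv_contOn {g : ℝ → ℝ} (hg : ContDiffOn ℝ 1 g (Ici 0)) {s : Set ℝ}
    (hs : s ⊆ Ioi 0) : ContinuousOn (deriv g) s := by
  refine ((hg.continuousOn_derivWithin (uniqueDiffOn_Ici 0) le_rfl).mono
      (hs.trans Ioi_subset_Ici_self)).congr ?_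
  exact fun x hx => (dEqW (hs hx)).symm

private lemma integrand_ii {g : ℝ → ℝ} (hα1 : α < 1) (hg : ContDiffOn ℝ 1 g (Ici 0))
    {t a b : ℝ} (ha : 0 ≤ a) (hab : a ≤ b) (hbt : b ≤ t) :
    IntervalIntegrable (fun x => deriv g x * (t - x) ^ (-α)) volume a b := by
  obtain ⟨M, hM0, hM⟩ := exists_deriv_bound hg t
  have hw := weight_ii (α := α) hα1 t a b
  refine ((hw.const_mul M)).mono_fun ?_ ?_
  · exact ((measurable_deriv g).aestronglyMeasurable).mul
      (intervalIntegrable_iff.mp hw).aestronglyMeasurable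
  · refine (ae_restrict_iff' measurableSet_uIoc).2 (ae_of_all _ fun x hx => ?_)
    rw [Set.uIoc_of_le hab] at hx
    have hx0 : 0 < x := lt_of_le_of_lt ha hx.1
    have hxt : x ≤ t := hx.2.trans hbt
    have hw0 : (0:ℝ) ≤ (t - x) ^ (-α) := Real.rpow_nonneg (by linarith) _
    simp only [Real.norm_eq_abs, abs_mul, abs_of_nonneg hw0, abs_of_nonneg hM0]
    exact mul_le_mul_of_nonneg_right (hM x ⟨hx0, hxt⟩) hw0

private lemma caputo_add {g h : ℝ → ℝ} (hα1 : α < 1) (hg : ContDiffOn ℝ 1 g (Ici 0))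
    (hh : ContDiffOn ℝ 1 h (Ici 0)) {t : ℝ} (ht : 0 < t) :
    caputo α (fun τ => g τ + h τ) t = caputo α g t + caputo α h t := by
  unfold caputo
  rw [← mul_add, ← intervalIntegral.integral_add (integrand_ii hα1 hg le_rfl ht.le le_rfl)
      (integrand_ii hα1 hh le_rfl ht.le le_rfl)]
  congr 1
  refine intervalIntegral.integral_congr_ae (ae_of_all _ fun x hx => ?_)
  rw [Set.uIoc_of_le ht.le] at hx
  rw [deriv_fun_add (diffAt hg hx.1) (diffAt hh hx.1), add_mul]

private lemma caputo_key {g : ℝ → ℝ} (hα0 : 0 < α) (hα1 : α < 1)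
    (hg : ContDiffOn ℝ 1 g (Ici 0)) {t : ℝ} (ht : 0 < t)
    (hmax : ∀ x ∈ Icc (0:ℝ) t, g x ≤ g t) :
    (g t - g 0) * t ^ (-α) ≤ ∫ x in (0:ℝ)..t, deriv g x * (t - x) ^ (-α) := by
  obtain ⟨M, hM0, hM⟩ := exists_deriv_bound hg t
  set Iful := ∫ x in (0:ℝ)..t, deriv g x * (t - x) ^ (-α) with hIful
  have hstep : ∀ δ ∈ Ioo (0:ℝ) (t/2),
      (g t - g δ) * (t - δ) ^ (-α) - M * δ ^ (1-α)
        - M * (t/2) ^ (-α) * δ - M * δ ^ (1-α) / (1-α) ≤ Iful := by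
    intro δ hδ
    obtain ⟨hδ0, hδt⟩ := hδ
    have hab : δ ≤ t - δ := by linarith
    have hb0 : (0:ℝ) < t - δ := by linarith
    have hrw : δ ^ (1-α) = δ * δ ^ (-α) := by
      rw [show (1:ℝ) - α = 1 + (-α) by ring, Real.rpow_add hδ0, Real.rpow_one]
    -- integration by parts on [δ, t-δ]
    have hu : ∀ x ∈ uIcc δ (t - δ), HasDerivAt (fun y => g y - g t) (deriv g x) x := by
      intro x hx
      rw [uIcc_of_le hab] at hx
      exact ((diffAt hg (lt_of_lt_of_le hδ0 hx.1)).hasDerivAt).sub_const (g t)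
    have hv : ∀ x ∈ uIcc δ (t - δ),
        HasDerivAt (fun y => (t - y) ^ (-α)) (α * (t - x) ^ (-α - 1)) x := by
      intro x hx
      rw [uIcc_of_le hab] at hx
      have hx1 : (0:ℝ) < t - x := by
        have := hx.2; linarith
      have h1 : HasDerivAt (fun y : ℝ => t - y) (-1) x := (hasDerivAt_id x).const_sub t
      have h2 : HasDerivAt (fun y : ℝ => y ^ (-α)) (-α * (t - x) ^ (-α - 1)) (t - x) :=
        Real.hasDerivAt_rpow_const (Or.inl hx1.ne')
      have h3 := h2.comp x h1
      rw [show α * (t - x) ^ (-α - 1) = -α * (t - x) ^ (-α - 1) * -1 by ring]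
      exact h3
    have hu' : IntervalIntegrable (deriv g) volume δ (t - δ) := by
      refine (deriv_contOn hg ?_).intervalIntegrable
      rw [uIcc_of_le hab]
      exact fun x hx => lt_of_lt_of_le hδ0 hx.1
    have hvcont : ContinuousOn (fun x : ℝ => α * (t - x) ^ (-α - 1)) (Icc δ (t - δ)) := by
      refine continuousOn_const.mul (((continuousOn_const.sub continuousOn_id)).rpow_const ?_)
      intro x hx
      have := hx.2
      exact Or.inl (by intro h; simp only [Pi.sub_apply, id] at h; nlinarith)
    have hv' : IntervalIntegrable (fun x : ℝ => α * (t - x) ^ (-α - 1)) volume δ (t - δ) := by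
      refine ContinuousOn.intervalIntegrable ?_
      rwa [uIcc_of_le hab]
    have hibp := intervalIntegral.integral_mul_deriv_eq_deriv_mul hu hv hu' hv'
    have hneg : (∫ x in δ..(t - δ), (g x - g t) * (α * (t - x) ^ (-α - 1))) ≤ 0 := by
      have hc : ContinuousOn (fun x : ℝ => (g x - g t) * (α * (t - x) ^ (-α - 1)))
          (Icc δ (t - δ)) := by
        refine ((hg.continuousOn.mono ?_).sub continuousOn_const).mul hvcont
        exact fun x hx => le_trans hδ0.le hx.1
      have hii : IntervalIntegrable (fun x : ℝ => (g x - g t) * (α * (t - x) ^ (-α - 1)))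
          volume δ (t - δ) := by
        refine ContinuousOn.intervalIntegrable ?_
        rwa [uIcc_of_le hab]
      have h0 := intervalIntegral.integral_mono_on hab hii
          (intervalIntegrable_const (c := (0:ℝ))) (fun x hx => ?_)
      · simpa using h0
      · have hgx : g x ≤ g t := hmax x ⟨le_trans hδ0.le hx.1, by linarith [hx.2]⟩
        have hwnn : (0:ℝ) ≤ α * (t - x) ^ (-α - 1) := by
          have : (0:ℝ) ≤ t - x := by linarith [hx.2]
          positivity
        exact mul_nonpos_iff.2 (Or.inr ⟨by linarith, hwnn⟩)
    have hlip : |g t - g (t - δ)| ≤ M * δ := by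
      have hintg : IntervalIntegrable (deriv g) volume (t - δ) t := by
        refine (deriv_contOn hg ?_).intervalIntegrable
        rw [uIcc_of_le (by linarith : t - δ ≤ t)]
        exact fun x hx => lt_of_lt_of_le hb0 hx.1
      have hftc : (∫ x in (t - δ)..t, deriv g x) = g t - g (t - δ) := by
        refine intervalIntegral.integral_eq_sub_of_hasDerivAt (fun x hx => ?_) hintg
        rw [uIcc_of_le (by linarith : t - δ ≤ t)] at hx
        exact (diffAt hg (lt_of_lt_of_le hb0 hx.1)).hasDerivAt
      have hb := intervalIntegral.norm_integral_le_of_norm_le_const (C := M)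
          (f := deriv g) (a := t - δ) (b := t) (fun x hx => ?_)
      · rw [hftc] at hb
        calc |g t - g (t - δ)| ≤ M * |t - (t - δ)| := hb
          _ = M * δ := by rw [show t - (t - δ) = δ by ring, abs_of_pos hδ0]
      · rw [Set.uIoc_of_le (by linarith : t - δ ≤ t)] at hx
        exact hM x ⟨lt_of_lt_of_le hb0 hx.1.le, hx.2⟩
    -- middle piece lower bound
    have hmid : (g t - g δ) * (t - δ) ^ (-α) - M * δ ^ (1-α)
        ≤ ∫ x in δ..(t - δ), deriv g x * (t - x) ^ (-α) := by
      have e1 : (g (t - δ) - g t) * (t - (t - δ)) ^ (-α) = (g (t - δ) - g t) * δ ^ (-α) := by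
        rw [show t - (t - δ) = δ by ring]
      have h1 : -(M * δ) ≤ g (t - δ) - g t := by
        have := (abs_le.mp hlip).2; linarith [abs_le.mp hlip]
      have h2 : -(M * δ) * δ ^ (-α) ≤ (g (t - δ) - g t) * δ ^ (-α) :=
        mul_le_mul_of_nonneg_right h1 (Real.rpow_nonneg hδ0.le _)
      have h3 : -(M * δ) * δ ^ (-α) = -(M * δ ^ (1-α)) := by rw [hrw]; ring
      rw [e1] at hibp
      nlinarith [hibp, hneg, h2]
    -- left piece lower bound
    have hleft : -(M * (t/2) ^ (-α) * δ) ≤ ∫ x in (0:ℝ)..δ, deriv g x * (t - x) ^ (-α) := by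
      have hb := intervalIntegral.norm_integral_le_of_norm_le_const
          (C := M * (t/2) ^ (-α)) (f := fun x => deriv g x * (t - x) ^ (-α))
          (a := 0) (b := δ) (fun x hx => ?_)
      · rw [Real.norm_eq_abs] at hb
        have : |δ - 0| = δ := by rw [sub_zero, abs_of_pos hδ0]
        rw [this] at hb
        have := (abs_le.mp hb).1
        linarith
      · rw [Set.uIoc_of_le hδ0.le] at hx
        have hx0 : 0 < x := hx.1
        have hxδ : x ≤ δ := hx.2
        have hw0 : (0:ℝ) ≤ (t - x) ^ (-α) := Real.rpow_nonneg (by linarith) _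
        have hwle : (t - x) ^ (-α) ≤ (t/2) ^ (-α) :=
          Real.rpow_le_rpow_of_nonpos (by linarith) (by linarith) (by linarith)
        rw [Real.norm_eq_abs, abs_mul, abs_of_nonneg hw0]
        exact mul_le_mul (hM x ⟨hx0, by linarith⟩) hwle hw0 hM0
    -- right piece lower bound
    have hright : -(M * δ ^ (1-α) / (1-α))
        ≤ ∫ x in (t - δ)..t, deriv g x * (t - x) ^ (-α) := by
      have hii : IntervalIntegrable (fun x => deriv g x * (t - x) ^ (-α))
          volume (t - δ) t := integrand_ii hα1 hg (by linarith) (by linarith) le_rfl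
      have habs := intervalIntegral.abs_integral_le_integral_abs (μ := volume)
          (f := fun x => deriv g x * (t - x) ^ (-α)) (a := t - δ) (b := t)
          (by linarith : t - δ ≤ t)
      have hmono : (∫ x in (t - δ)..t, |deriv g x * (t - x) ^ (-α)|)
          ≤ ∫ x in (t - δ)..t, M * (t - x) ^ (-α) := by
        refine intervalIntegral.integral_mono_on (by linarith) hii.abs
          ((weight_ii hα1 t (t - δ) t).const_mul M) (fun x hx => ?_)
        have hw0 : (0:ℝ) ≤ (t - x) ^ (-α) := Real.rpow_nonneg (by linarith [hx.2]) _
        rw [abs_mul, abs_of_nonneg hw0]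
        rcases eq_or_lt_of_le hx.1 with h | h
        · rcases eq_or_lt_of_le hx.2 with h2 | h2
          · exact mul_le_mul_of_nonneg_right
              (abs_le.mpr ⟨by
                have := hM ((t-δ+t)/2) ⟨by linarith, by linarith⟩
                -- fallback: x = t - δ, x > 0
                exact (abs_le.mp (hM x ⟨by rw [← h]; linarith, hx.2⟩)).1,
                (abs_le.mp (hM x ⟨by rw [← h]; linarith, hx.2⟩)).2⟩) hw0
          · exact mul_le_mul_of_nonneg_right (hM x ⟨by rw [← h]; linarith, hx.2⟩) hw0
        · exact mul_le_mul_of_nonneg_right (hM x ⟨by linarith, hx.2⟩) hw0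
      have hval : (∫ x in (t - δ)..t, M * (t - x) ^ (-α)) = M * (δ ^ (1-α) / (1-α)) := by
        rw [intervalIntegral.integral_const_mul]
        congr 1
        have hcomp := intervalIntegral.integral_comp_sub_left
            (a := t - δ) (b := t) (fun u : ℝ => u ^ (-α)) t
        rw [hcomp, show t - t = (0:ℝ) by ring, show t - (t - δ) = δ by ring]
        rw [integral_rpow (Or.inl (by linarith))]
        rw [Real.zero_rpow (by linarith : -α + 1 ≠ 0)]
        rw [show -α + 1 = 1 - α by ring]
        ring
      have h1 : |∫ x in (t - δ)..t, deriv g x * (t - x) ^ (-α)| ≤ M * (δ ^ (1-α) / (1-α)) := by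
        calc |∫ x in (t - δ)..t, deriv g x * (t - x) ^ (-α)|
            ≤ ∫ x in (t - δ)..t, |deriv g x * (t - x) ^ (-α)| := habs
          _ ≤ ∫ x in (t - δ)..t, M * (t - x) ^ (-α) := hmono
          _ = M * (δ ^ (1-α) / (1-α)) := hval
      have := (abs_le.mp h1).1
      have heq : M * (δ ^ (1-α) / (1-α)) = M * δ ^ (1-α) / (1-α) := by ring
      linarith [heq ▸ this]
    -- assemble
    have hsplit : Iful = (∫ x in (0:ℝ)..δ, deriv g x * (t - x) ^ (-α))
        + (∫ x in δ..(t - δ), deriv g x * (t - x) ^ (-α))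
        + (∫ x in (t - δ)..t, deriv g x * (t - x) ^ (-α)) := by
      rw [hIful]
      rw [intervalIntegral.integral_add_adjacent_intervals
          (integrand_ii hα1 hg le_rfl hδ0.le (by linarith))
          (integrand_ii hα1 hg hδ0.le hab (by linarith)),
        intervalIntegral.integral_add_adjacent_intervals
          (integrand_ii hα1 hg le_rfl (by linarith) (by linarith))
          (integrand_ii hα1 hg (by linarith) (by linarith) le_rfl)]
    rw [hsplit]
    linarith [hmid, hleft, hright]
  -- limit argument
  have l1 : Tendsto g (𝓝[>] (0:ℝ)) (𝓝 (g 0)) :=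
    (hg.continuousOn 0 self_mem_Ici).mono_left (nhdsWithin_mono 0 Ioi_subset_Ici_self)
  have l2 : Tendsto (fun δ : ℝ => (t - δ) ^ (-α)) (𝓝[>] (0:ℝ)) (𝓝 (t ^ (-α))) := by
    have hc : ContinuousAt (fun δ : ℝ => (t - δ) ^ (-α)) 0 := by
      have h1 : ContinuousAt (fun δ : ℝ => t - δ) 0 :=
        (continuous_const.sub continuous_id).continuousAt
      have h2 : ContinuousAt (fun y : ℝ => y ^ (-α)) (t - 0) := by
        rw [sub_zero]
        exact Real.continuousAt_rpow_const t (-α) (Or.inl ht.ne')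
      exact h2.comp h1
    have h5 : Tendsto (fun δ : ℝ => (t - δ) ^ (-α)) (𝓝 (0:ℝ)) (𝓝 ((t - 0) ^ (-α))) :=
      hc.tendsto
    have := h5.mono_left (nhdsWithin_le_nhds (s := Ioi (0:ℝ)))
    simpa using this
  have l3 : Tendsto (fun δ : ℝ => δ ^ (1-α)) (𝓝[>] (0:ℝ)) (𝓝 0) := by
    have hc : ContinuousAt (fun x : ℝ => x ^ (1-α)) 0 :=
      Real.continuousAt_rpow_const 0 (1-α) (Or.inr (by linarith))
    have := hc.tendsto.mono_left (nhdsWithin_le_nhds (s := Ioi (0:ℝ)))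
    rwa [Real.zero_rpow (by linarith : (1:ℝ)-α ≠ 0)] at this
  have l4 : Tendsto (fun δ : ℝ => δ) (𝓝[>] (0:ℝ)) (𝓝 0) :=
    tendsto_id.mono_left (nhdsWithin_le_nhds (s := Ioi (0:ℝ)))
  have hlim : Tendsto (fun δ : ℝ => (g t - g δ) * (t - δ) ^ (-α) - M * δ ^ (1-α)
        - M * (t/2) ^ (-α) * δ - M * δ ^ (1-α) / (1-α)) (𝓝[>] (0:ℝ))
      (𝓝 ((g t - g 0) * t ^ (-α))) := by
    have h := ((((tendsto_const_nhds (x := g t)).sub l1).mul l2).sub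
        (l3.const_mul M)).sub ((l4.const_mul (M * (t/2) ^ (-α))).sub ( (l3.const_mul M).div_const (1-α)).neg)
    -- build directly instead
    have hA := ((tendsto_const_nhds (x := g t)).sub l1).mul l2
    have hB := l3.const_mul M
    have hC := l4.const_mul (M * (t/2) ^ (-α))
    have hD := (l3.const_mul M).div_const (1-α)
    have := ((hA.sub hB).sub hC).sub hD
    simpa using this
  refine le_of_tendsto hlim ?_
  exact Filter.eventually_of_mem (Ioo_mem_nhdsGT_of_mem ⟨le_refl 0, by linarith⟩) hstep

end CaputoAux

/- STATEMENT 15 -/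
theorem stmt_15 (α : ℝ) (hα0 : 0 < α) (hα1 : α < 1)
    (Λ μ ρ φ σ ω d ξ₁ ξ₂ ξ₃ : ℝ)
    (hΛ : 0 < Λ) (hμ : 0 < μ) (hρ : 0 < ρ) (hφ : 0 < φ) (hσ : 0 < σ)
    (hω : 0 < ω) (hd : 0 < d)
    (hξ₁ : ξ₁ = ρ + φ + μ) (hξ₂ : ξ₂ = ω + μ) (hξ₃ : ξ₃ = σ + μ + d)
    (f : ℝ → ℝ → ℝ)
    (hf_nonneg : ∀ S I : ℝ, 0 ≤ S → 0 ≤ I → 0 ≤ f S I)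
    (hf_cont : ContinuousOn (fun p : ℝ × ℝ => f p.1 p.2) (Set.Ici 0 ×ˢ Set.Ici 0))
    (hf_cd : ContDiffOn ℝ 1 (fun p : ℝ × ℝ => f p.1 p.2) (Set.Ioi 0 ×ˢ Set.Ioi 0))
    (hH1 : ∀ I : ℝ, 0 ≤ I → f 0 I = 0)
    (hH2 : ∀ S I : ℝ, 0 < S → 0 ≤ I → 0 < deriv (fun s => f s I) S)
    (hH3 : ∀ S I : ℝ, 0 ≤ S → 0 ≤ I → deriv (fun i => f S i) I ≤ 0)
    (S I C A : ℝ → ℝ)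
    (hS : ContDiffOn ℝ 1 S (Set.Ici 0)) (hI : ContDiffOn ℝ 1 I (Set.Ici 0))
    (hC : ContDiffOn ℝ 1 C (Set.Ici 0)) (hA : ContDiffOn ℝ 1 A (Set.Ici 0))
    (hSnn : ∀ t : ℝ, 0 ≤ t → 0 ≤ S t) (hInn : ∀ t : ℝ, 0 ≤ t → 0 ≤ I t)
    (hCnn : ∀ t : ℝ, 0 ≤ t → 0 ≤ C t) (hAnn : ∀ t : ℝ, 0 ≤ t → 0 ≤ A t)
    (hsys1 : ∀ t : ℝ, 0 < t →
      caputo α S t = Λ - μ * S t - f (S t) (I t) * I t)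
    (hsys2 : ∀ t : ℝ, 0 < t →
      caputo α I t = f (S t) (I t) * I t - ξ₁ * I t + σ * A t + ω * C t)
    (hsys3 : ∀ t : ℝ, 0 < t → caputo α C t = φ * I t - ξ₂ * C t)
    (hsys4 : ∀ t : ℝ, 0 < t → caputo α A t = ρ * I t - ξ₃ * A t) :
    (∀ t : ℝ, 0 < t →
        caputo α (fun τ => S τ + I τ + C τ + A τ) t
          ≤ Λ - μ * (S t + I t + C t + A t))
    ∧ (∀ t : ℝ, 0 ≤ t →
        S t + I t + C t + A t ≤ (S 0 + I 0 + C 0 + A 0) + Λ / μ) := by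
  have hN : ContDiffOn ℝ 1 (fun τ => S τ + I τ + C τ + A τ) (Set.Ici 0) :=
    ((hS.add hI).add hC).add hA
  have hpart1 : ∀ t : ℝ, 0 < t →
      caputo α (fun τ => S τ + I τ + C τ + A τ) t
        ≤ Λ - μ * (S t + I t + C t + A t) := by
    intro t ht
    have h1 : caputo α (fun τ => S τ + I τ + C τ + A τ) t
        = caputo α (fun τ => S τ + I τ + C τ) t + caputo α A t :=
      caputo_add hα1 ((hS.add hI).add hC) hA ht
    have h2 : caputo α (fun τ => S τ + I τ + C τ) t
        = caputo α (fun τ => S τ + I τ) t + caputo α C t :=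
      caputo_add hα1 (hS.add hI) hC ht
    have h3 : caputo α (fun τ => S τ + I τ) t = caputo α S t + caputo α I t :=
      caputo_add hα1 hS hI ht
    have hAt : 0 ≤ A t := hAnn t ht.le
    have hdA : 0 ≤ d * A t := mul_nonneg hd.le hAt
    rw [h1, h2, h3, hsys1 t ht, hsys2 t ht, hsys3 t ht, hsys4 t ht, hξ₁, hξ₂, hξ₃]
    nlinarith [hdA]
  refine ⟨hpart1, ?_⟩
  by_contra hcon
  push_neg at hcon
  obtain ⟨t₁, ht₁, hbig⟩ := hcon
  set Nf : ℝ → ℝ := fun τ => S τ + I τ + C τ + A τ with hNf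
  set K : ℝ := (S 0 + I 0 + C 0 + A 0) + Λ / μ with hK
  have hΛμ : 0 < Λ / μ := div_pos hΛ hμ
  have hN0 : Nf 0 = K - Λ / μ := by simp [hNf, hK]
  have hN0nn : 0 ≤ Nf 0 := by
    have := hSnn 0 le_rfl; have := hInn 0 le_rfl; have := hCnn 0 le_rfl
    have := hAnn 0 le_rfl
    simp only [hNf]; linarith
  set B : Set ℝ := {x : ℝ | 0 ≤ x ∧ K ≤ Nf x} with hB
  have hBne : B.Nonempty := ⟨t₁, ht₁, hbig.le⟩
  have hBbdd : BddBelow B := ⟨0, fun x hx => hx.1⟩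
  have hBclosed : IsClosed B := by
    have : B = Set.Ici 0 ∩ Nf ⁻¹' (Set.Ici K) := by
      ext x; simp [hB, Set.mem_setOf_eq, and_comm]
    rw [this]
    exact hN.continuousOn.preimage_isClosed_of_isClosed isClosed_Ici isClosed_Ici
  set t₀ : ℝ := sInf B with ht₀def
  have ht₀mem : t₀ ∈ B := hBclosed.csInf_mem hBne hBbdd
  have ht₀0 : 0 ≤ t₀ := ht₀mem.1
  have ht₀K : K ≤ Nf t₀ := ht₀mem.2
  have ht₀pos : 0 < t₀ := by
    rcases lt_or_eq_of_le ht₀0 with h | h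
    · exact h
    · exfalso
      rw [← h] at ht₀K
      rw [hN0] at ht₀K
      linarith
  have hmax : ∀ x ∈ Set.Icc (0:ℝ) t₀, Nf x ≤ Nf t₀ := by
    intro x hx
    rcases eq_or_lt_of_le hx.2 with h | h
    · rw [h]
    · by_contra hgt
      push_neg at hgt
      have hxB : x ∈ B := by
        refine ⟨hx.1, ?_⟩
        by_contra hxK
        push_neg at hxK
        linarith
      have := csInf_le hBbdd hxB
      rw [← ht₀def] at this
      linarith
  have hkey := caputo_key hα0 hα1 hN ht₀pos hmax
  have hΓ : 0 < Real.Gamma (1 - α) := Real.Gamma_pos_of_pos (by linarith)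
  have hNft₀ : Nf t₀ = S t₀ + I t₀ + C t₀ + A t₀ := rfl
  have hcap_upper0 := hpart1 t₀ ht₀pos
  rw [← hNft₀] at hcap_upper0
  clear_value t₀
  clear_value B
  clear_value K
  clear_value Nf
  have hcap_lower : (1 / Real.Gamma (1 - α)) * ((Nf t₀ - Nf 0) * t₀ ^ (-α))
      ≤ caputo α Nf t₀ := by
    unfold caputo
    exact mul_le_mul_of_nonneg_left hkey (by positivity)
  have hdiff : Λ / μ ≤ Nf t₀ - Nf 0 := by rw [hN0]; linarith
  have hpos : 0 < (1 / Real.Gamma (1 - α)) * ((Nf t₀ - Nf 0) * t₀ ^ (-α)) :=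
    mul_pos (by positivity) (mul_pos (by linarith) (Real.rpow_pos_of_pos ht₀pos _))
  have hcap_upper : caputo α Nf t₀ ≤ Λ - μ * Nf t₀ := hcap_upper0
  have hμK : μ * (Λ / μ) = Λ := by field_simp
  have hNfK : μ * K ≤ μ * Nf t₀ := mul_le_mul_of_nonneg_left ht₀K hμ.le
  have hKval : μ * K = μ * Nf 0 + Λ := by
    rw [hK, hN0]
    have : μ * ((K - Λ / μ) + Λ / μ) = μ * (K - Λ / μ) + Λ := by
      rw [mul_add, hμK]
    rw [hK] at this ⊢
    linarith [this]
  have hμN0 : 0 ≤ μ * Nf 0 := mul_nonneg hμ.le hN0nn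
  linarith [hcap_lower, hcap_upper, hpos, hNfK, hKval, hμN0]
end
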